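/- arXiv:2604.05611 — 4 statements merged into one kernel-verified Lean document; each statement's English description precedes it below -/
import Mathlib

section
/- Let X be a compact metric space, and let (T_n)_{n≥1} be a sequence of homeomorphisms of X converging uniformly to a homeomorphism T of X. Let μ be a T-invariant Borel probability measure and, for each n, let μ_n be a T_n-invariant Borel probability measure, with μ_n converging weakly to μ. Let 𝒬 be a finite Borel partition of X such that μ(∂A) = 0 for every atom A of 𝒬. Then for every integer m ≥ 1, H_{μ_n}(⋁_{i=0}^{m−1} T_n^{−i}𝒬) → H_{μ}(⋁_{i=0}^{m−1} T^{−i}𝒬) as n → ∞. -/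
open MeasureTheory Filter Topology

/-- A finite Borel partition of `X`, with atoms indexed by `Fin k`. -/
def IsFinPartition {X : Type*} [MeasurableSpace X] {k : ℕ} (P : Fin k → Set X) : Prop :=
  (∀ i, MeasurableSet (P i)) ∧
  (Pairwise fun i j => Disjoint (P i) (P j)) ∧
  (⋃ i, P i) = Set.univ

/-- The entropy `H_ν(⋁_{i=0}^{m-1} S^{-i} P)` of the `m`-th join of the partition `P`
under the map `S`, with respect to the measure `ν` (convention `0 log 0 = 0`). -/
noncomputable def entJoin {X : Type*} [MeasurableSpace X] (ν : Measure X) (S : X → X)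
    {k : ℕ} (P : Fin k → Set X) (m : ℕ) : ℝ :=
  ∑ c : Fin m → Fin k,
    Real.negMulLog ((ν (⋂ i : Fin m, S^[(i : ℕ)] ⁻¹' P (c i))).toReal)

/-- Invariance of a measure under a continuous map passes to iterates. -/
lemma aux_iter_inv {X : Type*} [MeasurableSpace X] [TopologicalSpace X] [BorelSpace X]
    {f : X → X} (hf : Continuous f) {μ : Measure X}
    (hinv : ∀ B : Set X, MeasurableSet B → μ (f ⁻¹' B) = μ B) (i : ℕ) :
    ∀ B : Set X, MeasurableSet B → μ (f^[i] ⁻¹' B) = μ B := by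
  induction i with
  | zero => intro B _; simp
  | succ i ih =>
    intro B hB
    rw [Function.iterate_succ, Set.preimage_comp, hinv _ ((hf.iterate i).measurable hB),
      ih B hB]

/-- Frontier commutes with preimages under iterates of a homeomorphism. -/
lemma aux_frontier_iter {X : Type*} [TopologicalSpace X] (h : X ≃ₜ X) (s : Set X) (i : ℕ) :
    frontier ((⇑h)^[i] ⁻¹' s) = (⇑h)^[i] ⁻¹' frontier s := by
  induction i with
  | zero => simp
  | succ i ih =>
    rw [Function.iterate_succ, Set.preimage_comp, ← Homeomorph.preimage_frontier, ih,
      Set.preimage_comp]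

/-- Uniform convergence of homeomorphisms passes to iterates (on a compact space). -/
lemma aux_iterate_unif {X : Type*} [MetricSpace X] [CompactSpace X]
    (T : ℕ → X ≃ₜ X) (Tlim : X ≃ₜ X)
    (hunif : TendstoUniformly (fun n x => T n x) (⇑Tlim) atTop) (i : ℕ) :
    TendstoUniformly (fun n x => (⇑(T n))^[i] x) ((⇑Tlim)^[i]) atTop := by
  induction i with
  | zero =>
    rw [Metric.tendstoUniformly_iff]
    intro ε hε
    exact Eventually.of_forall fun n x => by simpa using hε
  | succ i ih =>
    have hTu : UniformContinuous ⇑Tlim :=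
      CompactSpace.uniformContinuous_of_continuous Tlim.continuous
    rw [Metric.tendstoUniformly_iff]
    intro ε hε
    have h1 := Metric.tendstoUniformly_iff.mp (hTu.comp_tendstoUniformly ih) (ε / 2)
      (by positivity)
    have h2 := Metric.tendstoUniformly_iff.mp hunif (ε / 2) (by positivity)
    filter_upwards [h1, h2] with n h1n h2n x
    have e1 : (⇑Tlim)^[i + 1] x = Tlim ((⇑Tlim)^[i] x) := Function.iterate_succ_apply' _ _ _
    have e2 : (⇑(T n))^[i + 1] x = T n ((⇑(T n))^[i] x) := Function.iterate_succ_apply' _ _ _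
    calc dist ((⇑Tlim)^[i + 1] x) ((⇑(T n))^[i + 1] x)
        ≤ dist ((⇑Tlim)^[i + 1] x) (Tlim ((⇑(T n))^[i] x))
          + dist (Tlim ((⇑(T n))^[i] x)) ((⇑(T n))^[i + 1] x) := dist_triangle _ _ _
      _ < ε / 2 + ε / 2 := by
          apply add_lt_add
          · have := h1n x
            simpa [e1, Function.comp] using this
          · have := h2n ((⇑(T n))^[i] x)
            simpa [e2, dist_comm] using this
      _ = ε := add_halves ε

theorem stmt2 {X : Type*} [MetricSpace X] [CompactSpace X] [MeasurableSpace X] [BorelSpace X]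
    (T : ℕ → X ≃ₜ X) (Tlim : X ≃ₜ X)
    (hunif : TendstoUniformly (fun n x => T n x) (⇑Tlim) atTop)
    (μ : Measure X) [IsProbabilityMeasure μ]
    (hμinv : ∀ B : Set X, MeasurableSet B → μ (⇑Tlim ⁻¹' B) = μ B)
    (μn : ℕ → Measure X) (hprob : ∀ n, IsProbabilityMeasure (μn n))
    (hinv : ∀ n, ∀ B : Set X, MeasurableSet B → (μn n) (⇑(T n) ⁻¹' B) = (μn n) B)
    (hweak : ∀ g : C(X, ℝ), Tendsto (fun n => ∫ x, g x ∂(μn n)) atTop (𝓝 (∫ x, g x ∂μ)))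
    {k : ℕ} (Q : Fin k → Set X) (hQ : IsFinPartition Q)
    (hbd : ∀ i, μ (frontier (Q i)) = 0)
    (m : ℕ) (hm : 1 ≤ m) :
    Tendsto (fun n => entJoin (μn n) (⇑(T n)) Q m) atTop (𝓝 (entJoin μ (⇑Tlim) Q m)) := by
  obtain ⟨hQm, -, -⟩ := hQ
  haveI hPI : ∀ n, IsProbabilityMeasure (μn n) := hprob
  set P : ProbabilityMeasure X := ⟨μ, inferInstance⟩ with hP
  set Pn : ℕ → ProbabilityMeasure X := fun n => ⟨μn n, hprob n⟩ with hPndef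
  have hPtend : Tendsto Pn atTop (𝓝 P) := by
    rw [ProbabilityMeasure.tendsto_iff_forall_integral_tendsto]
    intro f
    exact hweak f.toContinuousMap
  have hμiter := aux_iter_inv Tlim.continuous hμinv
  have key : ∀ c : Fin m → Fin k,
      Tendsto (fun n => ((μn n) (⋂ i : Fin m, (⇑(T n))^[(i : ℕ)] ⁻¹' Q (c i))).toReal)
        atTop (𝓝 ((μ (⋂ i : Fin m, (⇑Tlim)^[(i : ℕ)] ⁻¹' Q (c i))).toReal)) := by
    intro c
    set B : Set X := ⋂ i : Fin m, (⇑Tlim)^[(i : ℕ)] ⁻¹' Q (c i) with hBdef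
    set A : ℕ → Set X := fun n => ⋂ i : Fin m, (⇑(T n))^[(i : ℕ)] ⁻¹' Q (c i) with hAdef
    -- the frontier of B is μ-null
    have hBfr : μ (frontier B) = 0 := by
      have hsub : frontier B ⊆ ⋃ i : Fin m, (⇑Tlim)^[(i : ℕ)] ⁻¹' frontier (Q (c i)) := by
        intro x hx
        rw [frontier_eq_closure_inter_closure] at hx
        have hx1 : x ∈ closure B := hx.1
        have hx2 : x ∈ closure Bᶜ := hx.2
        have hBc : Bᶜ = ⋃ i : Fin m, ((⇑Tlim)^[(i : ℕ)] ⁻¹' Q (c i))ᶜ := by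
          rw [hBdef, Set.compl_iInter]
        rw [hBc, closure_iUnion_of_finite] at hx2
        obtain ⟨i, hi⟩ := Set.mem_iUnion.mp hx2
        refine Set.mem_iUnion.mpr ⟨i, ?_⟩
        rw [← aux_frontier_iter, frontier_eq_closure_inter_closure]
        exact ⟨closure_mono (Set.iInter_subset _ i) hx1, hi⟩
      refine measure_mono_null hsub (measure_iUnion_null fun i => ?_)
      rw [hμiter (i : ℕ) _ isClosed_frontier.measurableSet]
      exact hbd (c i)
    -- convergence of the measures of the fixed set B
    have hαE : Tendsto (fun n => (μn n) B) atTop (𝓝 (μ B)) :=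
      ProbabilityMeasure.tendsto_measure_of_null_frontier_of_tendsto' hPtend hBfr
    have hα : Tendsto (fun n => ((μn n) B).toReal) atTop (𝓝 ((μ B).toReal)) :=
      (ENNReal.tendsto_toReal (measure_ne_top μ B)).comp hαE
    -- the difference tends to zero
    have hβ : Tendsto (fun n => ((μn n) (A n)).toReal - ((μn n) B).toReal) atTop (𝓝 0) := by
      rw [NormedAddCommGroup.tendsto_nhds_zero]
      intro ε hε
      set C : ℝ → Fin k → Set X :=
        fun δ j => Metric.cthickening δ (Q j) ∩ Metric.cthickening δ ((Q j)ᶜ) with hCdef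
      have hCclosed : ∀ δ j, IsClosed (C δ j) :=
        fun δ j => Metric.isClosed_cthickening.inter Metric.isClosed_cthickening
      have hdecr : ∀ N M : ℕ, N ≤ M → (1 : ℝ) / (M + 1) ≤ 1 / (N + 1) := by
        intro N M hNM
        apply one_div_le_one_div_of_le (by positivity)
        have : (N : ℝ) ≤ M := by exact_mod_cast hNM
        linarith
      have hCanti : ∀ j, Antitone (fun N : ℕ => C (1 / (N + 1)) j) := by
        intro j N M hNM
        exact Set.inter_subset_inter (Metric.cthickening_mono (hdecr N M hNM) _)
          (Metric.cthickening_mono (hdecr N M hNM) _)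
      have hclos : ∀ E : Set X, (⋂ N : ℕ, Metric.cthickening (1 / (N + 1)) E) ⊆ closure E := by
        intro E x hx
        rw [EMetric.mem_closure_iff_infEdist_zero]
        have hle : ∀ N : ℕ, EMetric.infEdist x E ≤ ENNReal.ofReal (1 / (N + 1)) := by
          intro N
          exact Metric.mem_cthickening_iff.mp (Set.mem_iInter.mp hx N)
        have htd : Tendsto (fun N : ℕ => ENNReal.ofReal (1 / ((N : ℝ) + 1))) atTop (𝓝 0) := by
          rw [← ENNReal.ofReal_zero]
          exact ENNReal.tendsto_ofReal tendsto_one_div_add_atTop_nhds_zero_nat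
        have := ge_of_tendsto' htd hle
        exact le_antisymm this zero_le
      have hCiInter : ∀ j, (⋂ N : ℕ, C (1 / (N + 1)) j) ⊆ frontier (Q j) := by
        intro j x hx
        rw [frontier_eq_closure_inter_closure]
        rw [Set.mem_iInter] at hx
        constructor
        · exact hclos (Q j) (Set.mem_iInter.mpr fun N => (hx N).1)
        · exact hclos (Q j)ᶜ (Set.mem_iInter.mpr fun N => (hx N).2)
      have hCtend : ∀ j, Tendsto (fun N : ℕ => μ (C (1 / (N + 1)) j)) atTop (𝓝 0) := by
        intro j
        have h0 : μ (⋂ N : ℕ, C (1 / (N + 1)) j) = 0 :=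
          measure_mono_null (hCiInter j) (hbd j)
        have := tendsto_measure_iInter_atTop (μ := μ)
          (fun N => (hCclosed _ j).measurableSet.nullMeasurableSet)
          (hCanti j) ⟨0, measure_ne_top μ _⟩
        rw [h0] at this
        exact this
      have hε' : (0 : ℝ) < ε / (2 * ((m : ℝ) + 1)) := by positivity
      have hev : ∀ᶠ N : ℕ in atTop, ∀ j,
          μ (C (1 / (N + 1)) j) < ENNReal.ofReal (ε / (2 * ((m : ℝ) + 1))) := by
        rw [eventually_all]
        intro j
        exact (hCtend j).eventually_lt_const (by simp [ENNReal.ofReal_pos, hε'])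
      obtain ⟨N, hN⟩ := hev.exists
      set δ : ℝ := 1 / (N + 1) with hδdef
      have hδpos : 0 < δ := by positivity
      set D : Set X := ⋃ i : Fin m, (⇑Tlim)^[(i : ℕ)] ⁻¹' C δ (c i) with hDdef
      have hDclosed : IsClosed D :=
        isClosed_iUnion_of_finite fun i =>
          (hCclosed δ (c i)).preimage (Tlim.continuous.iterate _)
      have hDmeas : μ D < ENNReal.ofReal ε := by
        have hsum : μ D ≤ ∑ i : Fin m, μ ((⇑Tlim)^[(i : ℕ)] ⁻¹' C δ (c i)) :=
          measure_iUnion_fintype_le _ _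
        have heq : ∀ i : Fin m, μ ((⇑Tlim)^[(i : ℕ)] ⁻¹' C δ (c i)) = μ (C δ (c i)) :=
          fun i => hμiter _ _ (hCclosed δ (c i)).measurableSet
        calc μ D ≤ ∑ i : Fin m, μ ((⇑Tlim)^[(i : ℕ)] ⁻¹' C δ (c i)) := hsum
          _ = ∑ i : Fin m, μ (C δ (c i)) := Finset.sum_congr rfl fun i _ => heq i
          _ ≤ ∑ i : Fin m, ENNReal.ofReal (ε / (2 * ((m : ℝ) + 1))) :=
              Finset.sum_le_sum fun i _ => (hN (c i)).le
          _ = (m : ENNReal) * ENNReal.ofReal (ε / (2 * ((m : ℝ) + 1))) := by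
              simp [Finset.sum_const, nsmul_eq_mul]
          _ < ENNReal.ofReal ε := by
              rw [← ENNReal.ofReal_natCast m, ← ENNReal.ofReal_mul (by positivity)]
              rw [ENNReal.ofReal_lt_ofReal_iff hε]
              have hm1 : (0 : ℝ) < 2 * ((m : ℝ) + 1) := by positivity
              rw [← mul_div_assoc, div_lt_iff₀ hm1]
              have hm0 : (0 : ℝ) ≤ (m : ℝ) := Nat.cast_nonneg m
              nlinarith
      have hlimsup : (atTop.limsup fun n => (μn n) D) ≤ μ D :=
        ProbabilityMeasure.limsup_measure_closed_le_of_tendsto hPtend hDclosed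
      have hevD : ∀ᶠ n in atTop, (μn n) D < ENNReal.ofReal ε :=
        eventually_lt_of_limsup_lt (lt_of_le_of_lt hlimsup hDmeas)
      have hevU : ∀ᶠ n in atTop, ∀ i : Fin m, ∀ x : X,
          dist ((⇑Tlim)^[(i : ℕ)] x) ((⇑(T n))^[(i : ℕ)] x) < δ := by
        rw [eventually_all]
        intro i
        exact Metric.tendstoUniformly_iff.mp (aux_iterate_unif T Tlim hunif (i : ℕ)) δ hδpos
      filter_upwards [hevD, hevU] with n hn1 hn2
      haveI := hprob n
      have hsub1 : A n \ B ⊆ D := by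
        rintro x ⟨hxA, hxB⟩
        rw [hAdef, Set.mem_iInter] at hxA
        have hex : ∃ i : Fin m, x ∉ (⇑Tlim)^[(i : ℕ)] ⁻¹' Q (c i) := by
          by_contra h
          push_neg at h
          exact hxB (Set.mem_iInter.mpr h)
        obtain ⟨i, hi⟩ := hex
        refine Set.mem_iUnion.mpr ⟨i, Set.mem_preimage.mpr ⟨?_, ?_⟩⟩
        · apply Metric.thickening_subset_cthickening
          rw [Metric.mem_thickening_iff]
          exact ⟨(⇑(T n))^[(i : ℕ)] x, hxA i, hn2 i x⟩
        · exact Metric.self_subset_cthickening _ hi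
      have hsub2 : B \ A n ⊆ D := by
        rintro x ⟨hxB, hxA⟩
        rw [hBdef, Set.mem_iInter] at hxB
        have hex : ∃ i : Fin m, x ∉ (⇑(T n))^[(i : ℕ)] ⁻¹' Q (c i) := by
          by_contra h
          push_neg at h
          exact hxA (Set.mem_iInter.mpr h)
        obtain ⟨i, hi⟩ := hex
        refine Set.mem_iUnion.mpr ⟨i, Set.mem_preimage.mpr ⟨?_, ?_⟩⟩
        · exact Metric.self_subset_cthickening _ (hxB i)
        · apply Metric.thickening_subset_cthickening
          rw [Metric.mem_thickening_iff]
          exact ⟨(⇑(T n))^[(i : ℕ)] x, hi, hn2 i x⟩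
      have hfin : ∀ s : Set X, (μn n) s ≠ ⊤ := fun s => measure_ne_top _ s
      have h1 : (μn n) (A n) ≤ (μn n) B + (μn n) D := by
        calc (μn n) (A n) ≤ (μn n) (B ∪ (A n \ B)) := by
              apply measure_mono
              intro x hx
              by_cases hxB : x ∈ B
              · exact Or.inl hxB
              · exact Or.inr ⟨hx, hxB⟩
          _ ≤ (μn n) B + (μn n) (A n \ B) := measure_union_le _ _
          _ ≤ (μn n) B + (μn n) D := add_le_add_right (measure_mono hsub1) _
      have h2 : (μn n) B ≤ (μn n) (A n) + (μn n) D := by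
        calc (μn n) B ≤ (μn n) (A n ∪ (B \ A n)) := by
              apply measure_mono
              intro x hx
              by_cases hxA : x ∈ A n
              · exact Or.inl hxA
              · exact Or.inr ⟨hx, hxA⟩
          _ ≤ (μn n) (A n) + (μn n) (B \ A n) := measure_union_le _ _
          _ ≤ (μn n) (A n) + (μn n) D := add_le_add_right (measure_mono hsub2) _
      have hDlt : ((μn n) D).toReal < ε := ENNReal.toReal_lt_of_lt_ofReal hn1
      have key1 : ((μn n) (A n)).toReal - ((μn n) B).toReal ≤ ((μn n) D).toReal := by
        have ht := ENNReal.toReal_mono (ENNReal.add_ne_top.mpr ⟨hfin B, hfin D⟩) h1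
        rw [ENNReal.toReal_add (hfin B) (hfin D)] at ht
        linarith
      have key2 : ((μn n) B).toReal - ((μn n) (A n)).toReal ≤ ((μn n) D).toReal := by
        have ht := ENNReal.toReal_mono (ENNReal.add_ne_top.mpr ⟨hfin (A n), hfin D⟩) h2
        rw [ENNReal.toReal_add (hfin (A n)) (hfin D)] at ht
        linarith
      rw [Real.norm_eq_abs, abs_sub_lt_iff]
      constructor <;> linarith
    have h := hβ.add hα
    rw [zero_add] at h
    refine h.congr fun n => ?_
    show ((μn n) (A n)).toReal - ((μn n) B).toReal + ((μn n) B).toReal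
        = ((μn n) (A n)).toReal
    ring
  simp only [entJoin]
  exact tendsto_finset_sum _ fun c _ =>
    (Real.continuous_negMulLog.tendsto _).comp (key c)
end

section
/- Let X be a compact metric space, (T_n)_{n≥1} a sequence of homeomorphisms of X converging uniformly to a homeomorphism T, μ a T-invariant Borel probability measure, and (μ_n)_{n≥1} Borel probability measures converging weakly to μ (each μ_n being T_n-invariant). Let m ≥ 1 and let A_0, …, A_{m−1} ⊆ X be Borel sets with μ(∂A_j) = 0 for every 0 ≤ j ≤ m−1. Then μ_n(A_0 ∩ T_n^{−1}A_1 ∩ ⋯ ∩ T_n^{−(m−1)}A_{m−1}) → μ(A_0 ∩ T^{−1}A_1 ∩ ⋯ ∩ T^{−(m−1)}A_{m−1}) as n → ∞. -/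
open MeasureTheory Filter Topology
open scoped ENNReal NNReal

lemma my_frontier_iInter_subset {X : Type*} [TopologicalSpace X] {ι : Type*} [Finite ι]
    (E : ι → Set X) : frontier (⋂ i, E i) ⊆ ⋃ i, frontier (E i) := by
  intro x hx
  have h1 : x ∈ closure (⋂ i, E i) := hx.1
  have h2 : x ∉ interior (⋂ i, E i) := hx.2
  rw [interior_iInter_of_finite] at h2
  simp only [Set.mem_iInter, not_forall] at h2
  obtain ⟨i, hi⟩ := h2
  exact Set.mem_iUnion.mpr ⟨i, ⟨closure_mono (Set.iInter_subset E i) h1, hi⟩⟩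

theorem stmt4 {X : Type*} [MetricSpace X] [CompactSpace X] [MeasurableSpace X] [BorelSpace X]
    (T : ℕ → X ≃ₜ X) (Tlim : X ≃ₜ X)
    (hunif : TendstoUniformly (fun n x => T n x) (⇑Tlim) atTop)
    (μ : Measure X) [IsProbabilityMeasure μ]
    (hμinv : ∀ B : Set X, MeasurableSet B → μ (⇑Tlim ⁻¹' B) = μ B)
    (μn : ℕ → Measure X) (hprob : ∀ n, IsProbabilityMeasure (μn n))
    (hinv : ∀ n, ∀ B : Set X, MeasurableSet B → (μn n) (⇑(T n) ⁻¹' B) = (μn n) B)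
    (hweak : ∀ g : C(X, ℝ), Tendsto (fun n => ∫ x, g x ∂(μn n)) atTop (𝓝 (∫ x, g x ∂μ)))
    (m : ℕ) (hm : 1 ≤ m)
    (A : Fin m → Set X) (hA : ∀ j, MeasurableSet (A j))
    (hbd : ∀ j, μ (frontier (A j)) = 0) :
    Tendsto (fun n => (μn n) (⋂ j : Fin m, (⇑(T n))^[(j : ℕ)] ⁻¹' A j)) atTop
      (𝓝 (μ (⋂ j : Fin m, (⇑Tlim)^[(j : ℕ)] ⁻¹' A j))) := by
  classical
  -- continuity of iterates
  have hgc : ∀ j : ℕ, Continuous ((⇑Tlim)^[j]) := fun j => Tlim.continuous.iterate j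
  -- invariance of μ under iterates
  have hμit : ∀ (j : ℕ) (B : Set X), MeasurableSet B → μ ((⇑Tlim)^[j] ⁻¹' B) = μ B := by
    intro j
    induction j with
    | zero => intro B _; simp
    | succ j ih =>
      intro B hB
      rw [Function.iterate_succ, Set.preimage_comp,
        hμinv _ (hB.preimage (hgc j).measurable)]
      exact ih B hB
  -- uniform convergence of iterates
  have hTu : UniformContinuous ⇑Tlim := CompactSpace.uniformContinuous_of_continuous Tlim.continuous
  have hit : ∀ j : ℕ, TendstoUniformly (fun n x => (⇑(T n))^[j] x) ((⇑Tlim)^[j]) atTop := by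
    intro j
    induction j with
    | zero =>
      rw [Metric.tendstoUniformly_iff]
      intro ε hε
      filter_upwards with n x
      simpa using hε
    | succ j ih =>
      rw [Metric.tendstoUniformly_iff] at ih ⊢
      intro ε hε
      obtain ⟨δ, hδpos, hδ⟩ := Metric.uniformContinuous_iff.mp hTu (ε / 2) (half_pos hε)
      filter_upwards [ih δ hδpos, Metric.tendstoUniformly_iff.mp hunif (ε / 2) (half_pos hε)]
        with n h1 h2 x
      have htri := dist_triangle (Tlim ((⇑Tlim)^[j] x)) (Tlim ((⇑(T n))^[j] x))
        (T n ((⇑(T n))^[j] x))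
      have ha : dist (Tlim ((⇑Tlim)^[j] x)) (Tlim ((⇑(T n))^[j] x)) < ε / 2 := hδ (h1 x)
      have hb : dist (Tlim ((⇑(T n))^[j] x)) (T n ((⇑(T n))^[j] x)) < ε / 2 := h2 _
      rw [Function.iterate_succ_apply', Function.iterate_succ_apply']
      linarith
  -- portmanteau
  let P : ProbabilityMeasure X := ⟨μ, inferInstance⟩
  let Pn : ℕ → ProbabilityMeasure X := fun n => ⟨μn n, hprob n⟩
  have hPt : Tendsto Pn atTop (𝓝 P) := by
    rw [ProbabilityMeasure.tendsto_iff_forall_integral_tendsto]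
    intro f
    exact hweak f.toContinuousMap
  have key : ∀ E : Set X, μ (frontier E) = 0 →
      Tendsto (fun n => μn n E) atTop (𝓝 (μ E)) := fun E hE =>
    ProbabilityMeasure.tendsto_measure_of_null_frontier_of_tendsto' hPt hE
  -- countably many bad levels
  have hlev : ∀ (s : Set X) (j : ℕ),
      Set.Countable {t : ℝ≥0∞ | 0 < μ {x | EMetric.infEdist ((⇑Tlim)^[j] x) s = t}} := by
    intro s j
    exact Measure.countable_meas_level_set_pos ((EMetric.continuous_infEdist.comp (hgc j)).measurable)
  set bad : Set ℝ≥0∞ :=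
    (⋃ j : Fin m, {t | 0 < μ {x | EMetric.infEdist ((⇑Tlim)^[(j : ℕ)] x) (A j) = t}}) ∪
      (⋃ j : Fin m, {t | 0 < μ {x | EMetric.infEdist ((⇑Tlim)^[(j : ℕ)] x) ((A j)ᶜ) = t}})
    with hbaddef
  have hbadc : Set.Countable bad :=
    (Set.countable_iUnion fun j => hlev (A j) j).union
      (Set.countable_iUnion fun j => hlev ((A j)ᶜ) j)
  have hgood : ∀ a : ℝ, 0 < a → ∃ ε : ℝ, 0 < ε ∧ ε ≤ a ∧
      (∀ j : Fin m, μ {x | EMetric.infEdist ((⇑Tlim)^[(j : ℕ)] x) (A j) = ENNReal.ofReal ε} = 0) ∧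
      (∀ j : Fin m,
        μ {x | EMetric.infEdist ((⇑Tlim)^[(j : ℕ)] x) ((A j)ᶜ) = ENNReal.ofReal ε} = 0) := by
    intro a ha
    have hbadR : Set.Countable (ENNReal.toReal '' bad) := hbadc.image _
    have hvol : ¬ Set.Ioo (0 : ℝ) a ⊆ ENNReal.toReal '' bad := by
      intro hsub
      have h1 : volume (Set.Ioo (0 : ℝ) a) = 0 :=
        measure_mono_null hsub (hbadR.measure_zero volume)
      rw [Real.volume_Ioo] at h1
      rw [ENNReal.ofReal_eq_zero] at h1
      linarith
    obtain ⟨ε, hεI, hεb⟩ := Set.not_subset.mp hvol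
    have hnotbad : ENNReal.ofReal ε ∉ bad := by
      intro hmem
      exact hεb ⟨_, hmem, ENNReal.toReal_ofReal hεI.1.le⟩
    refine ⟨ε, hεI.1, hεI.2.le, fun j => ?_, fun j => ?_⟩
    · by_contra h
      exact hnotbad (Set.mem_union_left _
        (Set.mem_iUnion.mpr ⟨j, pos_iff_ne_zero.mpr h⟩))
    · by_contra h
      exact hnotbad (Set.mem_union_right _
        (Set.mem_iUnion.mpr ⟨j, pos_iff_ne_zero.mpr h⟩))
  -- main sets
  set cI : Set X := ⋂ j : Fin m, (⇑Tlim)^[(j : ℕ)] ⁻¹' closure (A j) with hcI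
  set iI : Set X := ⋂ j : Fin m, (⇑Tlim)^[(j : ℕ)] ⁻¹' interior (A j) with hiI
  set Blim : Set X := ⋂ j : Fin m, (⇑Tlim)^[(j : ℕ)] ⁻¹' A j with hBlim
  have hiI_B : iI ⊆ Blim := Set.iInter_mono fun j => Set.preimage_mono interior_subset
  have hB_cI : Blim ⊆ cI := Set.iInter_mono fun j => Set.preimage_mono subset_closure
  have hdiff : μ (cI \ iI) = 0 := by
    have hsub : cI \ iI ⊆ ⋃ j : Fin m, (⇑Tlim)^[(j : ℕ)] ⁻¹' frontier (A j) := by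
      rintro x ⟨hxc, hxi⟩
      rw [hiI] at hxi
      simp only [Set.mem_iInter, not_forall, Set.mem_preimage] at hxi
      obtain ⟨j, hj⟩ := hxi
      have hxc' : (⇑Tlim)^[(j : ℕ)] x ∈ closure (A j) := by
        rw [hcI] at hxc
        simp only [Set.mem_iInter, Set.mem_preimage] at hxc
        exact hxc j
      exact Set.mem_iUnion.mpr ⟨j, ⟨hxc', hj⟩⟩
    refine measure_mono_null hsub (measure_iUnion_null fun j => ?_)
    rw [hμit _ _ isClosed_frontier.measurableSet]
    exact hbd j
  have hμcI : μ cI = μ Blim := by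
    apply le_antisymm _ (measure_mono hB_cI)
    calc μ cI ≤ μ (Blim ∪ (cI \ iI)) := measure_mono (fun x hx => by
          by_cases hxB : x ∈ Blim
          · exact Or.inl hxB
          · exact Or.inr ⟨hx, fun hxi => hxB (hiI_B hxi)⟩)
      _ ≤ μ Blim + μ (cI \ iI) := measure_union_le _ _
      _ = μ Blim := by rw [hdiff, add_zero]
  have hμiI : μ iI = μ Blim := by
    apply le_antisymm (measure_mono hiI_B)
    calc μ Blim ≤ μ (iI ∪ (cI \ iI)) := measure_mono (fun x hx => by
          by_cases hxi : x ∈ iI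
          · exact Or.inl hxi
          · exact Or.inr ⟨hB_cI hx, hxi⟩)
      _ ≤ μ iI + μ (cI \ iI) := measure_union_le _ _
      _ = μ iI := by rw [hdiff, add_zero]
  -- thickening limits
  have hrk : Tendsto (fun k : ℕ => (1 : ℝ) / (k + 1)) atTop (𝓝 0) :=
    tendsto_one_div_add_atTop_nhds_zero_nat
  have hrkpos : ∀ k : ℕ, 0 < (1 : ℝ) / (k + 1) := fun k => by positivity
  have hrkanti : Antitone fun k : ℕ => (1 : ℝ) / (k + 1) := by
    intro k l hkl
    have hcast : (k : ℝ) + 1 ≤ (l : ℝ) + 1 := by exact_mod_cast Nat.succ_le_succ hkl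
    exact one_div_le_one_div_of_le (by positivity) hcast
  have hofreal : Tendsto (fun k : ℕ => ENNReal.ofReal ((1 : ℝ) / (k + 1))) atTop (𝓝 0) := by
    rw [← ENNReal.ofReal_zero]
    exact (ENNReal.continuous_ofReal.tendsto 0).comp hrk
  have hcthint : ∀ s : Set X,
      (⋂ k : ℕ, Metric.cthickening ((1 : ℝ) / (k + 1)) s) = closure s := by
    intro s
    apply Set.Subset.antisymm
    · intro x hx
      rw [EMetric.mem_closure_iff_infEdist_zero]
      have h1 : ∀ k : ℕ, EMetric.infEdist x s ≤ ENNReal.ofReal ((1 : ℝ) / (k + 1)) := fun k =>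
        Metric.mem_cthickening_iff.mp (Set.mem_iInter.mp hx k)
      exact le_antisymm (ge_of_tendsto' hofreal h1) zero_le
    · exact Set.subset_iInter fun k => Metric.closure_subset_cthickening _ s
  have hthint : ∀ s : Set X,
      (⋂ k : ℕ, Metric.thickening ((1 : ℝ) / (k + 1)) s) = closure s := by
    intro s
    apply Set.Subset.antisymm
    · intro x hx
      rw [EMetric.mem_closure_iff_infEdist_zero]
      have h1 : ∀ k : ℕ, EMetric.infEdist x s ≤ ENNReal.ofReal ((1 : ℝ) / (k + 1)) := fun k =>
        (Metric.mem_thickening_iff_infEdist_lt.mp (Set.mem_iInter.mp hx k)).le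
      exact le_antisymm (ge_of_tendsto' hofreal h1) zero_le
    · exact Set.subset_iInter fun k => Metric.closure_subset_thickening (hrkpos k) s
  -- limsup bound
  have hlimsup : ∀ δ : ℝ≥0∞, δ ≠ 0 →
      limsup (fun n => μn n (⋂ j : Fin m, (⇑(T n))^[(j : ℕ)] ⁻¹' A j)) atTop ≤ μ Blim + δ := by
    intro δ hδ
    set Cs : ℕ → Set X :=
      fun k => ⋂ j : Fin m, (⇑Tlim)^[(j : ℕ)] ⁻¹' Metric.cthickening ((1 : ℝ) / (k + 1)) (A j)
      with hCs
    have hCmes : ∀ k, NullMeasurableSet (Cs k) μ := fun k =>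
      (MeasurableSet.iInter fun j =>
        Metric.isClosed_cthickening.measurableSet.preimage (hgc _).measurable).nullMeasurableSet
    have hCanti : Antitone Cs := fun k l hkl => Set.iInter_mono fun j =>
      Set.preimage_mono (Metric.cthickening_mono (hrkanti hkl) _)
    have hCint : (⋂ k, Cs k) = cI := by
      rw [hcI, hCs, Set.iInter_comm]
      refine Set.iInter_congr fun j => ?_
      rw [← Set.preimage_iInter, hcthint (A j)]
    have htendC : Tendsto (μ ∘ Cs) atTop (𝓝 (μ cI)) := by
      have h := tendsto_measure_iInter_atTop hCmes hCanti ⟨0, measure_ne_top μ _⟩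
      rwa [hCint] at h
    have hlt : μ cI < μ Blim + δ := by
      rw [hμcI]; exact ENNReal.lt_add_right (measure_ne_top μ _) hδ
    obtain ⟨k, hk⟩ := (htendC.eventually_lt_const hlt).exists
    obtain ⟨ε, hε0, hεle, hgA, -⟩ := hgood ((1 : ℝ) / (k + 1)) (hrkpos k)
    set Cε : Set X := ⋂ j : Fin m, (⇑Tlim)^[(j : ℕ)] ⁻¹' Metric.cthickening ε (A j) with hCε
    have hCεsub : Cε ⊆ Cs k := Set.iInter_mono fun j =>
      Set.preimage_mono (Metric.cthickening_mono hεle _)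
    have hfr : μ (frontier Cε) = 0 := by
      refine measure_mono_null (my_frontier_iInter_subset _)
        (measure_iUnion_null fun j => measure_mono_null ?_ (hgA j))
      exact ((hgc _).frontier_preimage_subset _).trans
        (Set.preimage_mono (Metric.frontier_cthickening_subset _))
    have hweakC : Tendsto (fun n => μn n Cε) atTop (𝓝 (μ Cε)) := key _ hfr
    have hincl : ∀ᶠ n in atTop, (⋂ j : Fin m, (⇑(T n))^[(j : ℕ)] ⁻¹' A j) ⊆ Cε := by
      have hj : ∀ j : Fin m, ∀ᶠ n in atTop,
          ∀ x, dist ((⇑Tlim)^[(j : ℕ)] x) ((⇑(T n))^[(j : ℕ)] x) < ε :=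
        fun j => Metric.tendstoUniformly_iff.mp (hit j) ε hε0
      filter_upwards [eventually_all.mpr hj] with n hn x hx
      rw [Set.mem_iInter] at hx
      rw [hCε, Set.mem_iInter]
      intro j
      rw [Set.mem_preimage, Metric.mem_cthickening_iff]
      calc EMetric.infEdist ((⇑Tlim)^[(j : ℕ)] x) (A j)
          ≤ edist ((⇑Tlim)^[(j : ℕ)] x) ((⇑(T n))^[(j : ℕ)] x) :=
            EMetric.infEdist_le_edist_of_mem (hx j)
        _ ≤ ENNReal.ofReal ε := by
            rw [edist_dist]; exact ENNReal.ofReal_le_ofReal (hn j x).le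
    have hmono : ∀ᶠ n in atTop,
        μn n (⋂ j : Fin m, (⇑(T n))^[(j : ℕ)] ⁻¹' A j) ≤ μn n Cε := by
      filter_upwards [hincl] with n hn
      exact measure_mono hn
    calc limsup (fun n => μn n (⋂ j : Fin m, (⇑(T n))^[(j : ℕ)] ⁻¹' A j)) atTop
        ≤ limsup (fun n => μn n Cε) atTop := limsup_le_limsup hmono
      _ = μ Cε := hweakC.limsup_eq
      _ ≤ μ (Cs k) := measure_mono hCεsub
      _ ≤ μ Blim + δ := hk.le
  -- liminf bound
  have hliminf : ∀ δ : ℝ≥0∞, δ ≠ 0 →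
      μ Blim ≤ liminf (fun n => μn n (⋂ j : Fin m, (⇑(T n))^[(j : ℕ)] ⁻¹' A j)) atTop + δ := by
    intro δ hδ
    set Us : ℕ → Set X :=
      fun k => ⋂ j : Fin m,
        (⇑Tlim)^[(j : ℕ)] ⁻¹' (Metric.thickening ((1 : ℝ) / (k + 1)) ((A j)ᶜ))ᶜ with hUs
    have hUmono : Monotone Us := fun k l hkl => Set.iInter_mono fun j =>
      Set.preimage_mono (Set.compl_subset_compl.mpr (Metric.thickening_mono (hrkanti hkl) _))
    have hUunion : (⋃ k, Us k) = iI := by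
      have heq := Set.iUnion_iInter_of_monotone
        (s := fun (j : Fin m) (k : ℕ) =>
          (⇑Tlim)^[(j : ℕ)] ⁻¹' (Metric.thickening ((1 : ℝ) / (k + 1)) ((A j)ᶜ))ᶜ)
        (fun j k l hkl => Set.preimage_mono
          (Set.compl_subset_compl.mpr (Metric.thickening_mono (hrkanti hkl) _)))
      rw [hiI, hUs, heq]
      refine Set.iInter_congr fun j => ?_
      rw [← Set.preimage_iUnion]
      congr 1
      rw [← Set.compl_iInter, hthint ((A j)ᶜ), closure_compl, compl_compl]
    have htendU : Tendsto (μ ∘ Us) atTop (𝓝 (μ iI)) := by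
      have h := tendsto_measure_iUnion_atTop (μ := μ) hUmono
      rwa [hUunion] at h
    have hex : ∃ k, μ Blim - δ ≤ μ (Us k) := by
      rcases eq_or_ne (μ Blim - δ) 0 with h0 | h0
      · exact ⟨0, h0 ▸ zero_le⟩
      · have hBne : μ Blim ≠ 0 := by
          intro hB
          exact h0 (by rw [hB, zero_tsub])
        have hlt : μ Blim - δ < μ iI := by
          rw [hμiI]
          exact ENNReal.sub_lt_self (measure_ne_top μ _) hBne hδ
        obtain ⟨k, hk⟩ := (htendU.eventually_const_lt hlt).exists
        exact ⟨k, hk.le⟩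
    obtain ⟨k, hk⟩ := hex
    have hBlimle : μ Blim ≤ μ (Us k) + δ := tsub_le_iff_right.mp hk
    obtain ⟨ε, hε0, hεle, -, hgAc⟩ := hgood ((1 : ℝ) / (k + 1)) (hrkpos k)
    set Uε : Set X := ⋂ j : Fin m, (⇑Tlim)^[(j : ℕ)] ⁻¹' (Metric.thickening ε ((A j)ᶜ))ᶜ with hUε
    have hUsub : Us k ⊆ Uε := Set.iInter_mono fun j =>
      Set.preimage_mono (Set.compl_subset_compl.mpr (Metric.thickening_mono hεle _))
    have hfr : μ (frontier Uε) = 0 := by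
      refine measure_mono_null (my_frontier_iInter_subset _)
        (measure_iUnion_null fun j => measure_mono_null ?_ (hgAc j))
      show frontier ((⇑Tlim)^[(j : ℕ)] ⁻¹' (Metric.thickening ε ((A j)ᶜ))ᶜ) ⊆
        (⇑Tlim)^[(j : ℕ)] ⁻¹' {y | EMetric.infEdist y ((A j)ᶜ) = ENNReal.ofReal ε}
      refine ((hgc _).frontier_preimage_subset _).trans (Set.preimage_mono ?_)
      intro y hy
      rw [frontier_compl] at hy
      exact Metric.frontier_thickening_subset _ hy
    have hweakU : Tendsto (fun n => μn n Uε) atTop (𝓝 (μ Uε)) := key _ hfr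
    have hincl : ∀ᶠ n in atTop, Uε ⊆ ⋂ j : Fin m, (⇑(T n))^[(j : ℕ)] ⁻¹' A j := by
      have hj : ∀ j : Fin m, ∀ᶠ n in atTop,
          ∀ x, dist ((⇑Tlim)^[(j : ℕ)] x) ((⇑(T n))^[(j : ℕ)] x) < ε :=
        fun j => Metric.tendstoUniformly_iff.mp (hit j) ε hε0
      filter_upwards [eventually_all.mpr hj] with n hn x hx
      rw [hUε, Set.mem_iInter] at hx
      rw [Set.mem_iInter]
      intro j
      rw [Set.mem_preimage]
      by_contra hmem
      apply hx j
      rw [Metric.mem_thickening_iff_infEdist_lt]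
      calc EMetric.infEdist ((⇑Tlim)^[(j : ℕ)] x) ((A j)ᶜ)
          ≤ edist ((⇑Tlim)^[(j : ℕ)] x) ((⇑(T n))^[(j : ℕ)] x) :=
            EMetric.infEdist_le_edist_of_mem hmem
        _ < ENNReal.ofReal ε := by
            rw [edist_dist]; exact (ENNReal.ofReal_lt_ofReal_iff hε0).mpr (hn j x)
    have hmono : ∀ᶠ n in atTop,
        μn n Uε ≤ μn n (⋂ j : Fin m, (⇑(T n))^[(j : ℕ)] ⁻¹' A j) := by
      filter_upwards [hincl] with n hn
      exact measure_mono hn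
    have hle : μ Uε ≤ liminf (fun n => μn n (⋂ j : Fin m, (⇑(T n))^[(j : ℕ)] ⁻¹' A j)) atTop := by
      have h := liminf_le_liminf hmono
      rwa [hweakU.liminf_eq] at h
    calc μ Blim ≤ μ (Us k) + δ := hBlimle
      _ ≤ μ Uε + δ := add_le_add_left (measure_mono hUsub) δ
      _ ≤ liminf (fun n => μn n (⋂ j : Fin m, (⇑(T n))^[(j : ℕ)] ⁻¹' A j)) atTop + δ :=
          add_le_add_left hle δ
  -- conclude
  apply tendsto_of_le_liminf_of_limsup_le
  · refine ENNReal.le_of_forall_pos_le_add fun r hr _ => ?_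
    exact hliminf r (by exact_mod_cast hr.ne')
  · refine ENNReal.le_of_forall_pos_le_add fun r hr _ => ?_
    exact hlimsup r (by exact_mod_cast hr.ne')
  · exact isBounded_le_of_top
  · exact isBounded_ge_of_bot
end

section
/- Let X be a compact metric space, T : X → X a homeomorphism, and μ a Borel probability measure on X (not necessarily invariant). Let E be a finite nonempty subset of ℕ, 𝒬 a finite Borel partition of X, and m ≥ 1 an integer. Define μ^E := (1/#E) ∑_{j∈E} T^j_*μ (i.e. μ^E(B) = (1/#E)∑_{j∈E} μ(T^{−j}B)), 𝒬^E := ⋁_{j∈E} T^{−j}𝒬, and 𝒬^m := ⋁_{j=0}^{m−1} T^{−j}𝒬. Then (1/#E)·H_μ(𝒬^E) ≤ (1/m)·H_{μ^E}(𝒬^m) + 6m·(#((E+1)△E)/#E)·log #𝒬, where E+1 := {j+1 : j ∈ E} and △ denotes symmetric difference. -/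
open MeasureTheory Filter Topology
open scoped ENNReal

/-- The entropy `H_ν(⋁_{j ∈ E} S^{-j} Q)` of the join of the partition `Q` along the finite
set of times `E`, with respect to the measure `ν` (convention `0 log 0 = 0`). -/
noncomputable def entJoinF {X : Type*} [MeasurableSpace X] (ν : Measure X) (S : X → X)
    {k : ℕ} (Q : Fin k → Set X) (E : Finset ℕ) : ℝ :=
  ∑ c : {j // j ∈ E} → Fin k,
    Real.negMulLog ((ν (⋂ j : {j // j ∈ E}, S^[(j : ℕ)] ⁻¹' Q (c j))).toReal)

namespace Stmt6
open Real Set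

variable {X : Type*} [MeasurableSpace X] {k : ℕ} {S : X → X} {Q : Fin k → Set X}

/-- atom of the join partition -/
def jf (S : X → X) (Q : Fin k → Set X) (E : Finset ℕ) (c : {j // j ∈ E} → Fin k) : Set X :=
  ⋂ j : {j // j ∈ E}, S^[(j : ℕ)] ⁻¹' Q (c j)

lemma entJoinF_def (ν : Measure X) (E : Finset ℕ) :
    entJoinF ν S Q E = ∑ c, Real.negMulLog ((ν (jf S Q E c)).toReal) := rfl

lemma jf_meas (hS : Measurable S) (hQm : ∀ i, MeasurableSet (Q i)) (E : Finset ℕ)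
    (c : {j // j ∈ E} → Fin k) : MeasurableSet (jf S Q E c) :=
  MeasurableSet.iInter fun j => (hS.iterate (j : ℕ)) (hQm (c j))

lemma jf_disj (hQd : Pairwise fun i j => Disjoint (Q i) (Q j)) (E : Finset ℕ) :
    Pairwise (Function.onFun Disjoint (jf S Q E)) := by
  intro c c' hne
  obtain ⟨j, hj⟩ : ∃ j, c j ≠ c' j := Function.ne_iff.mp hne
  exact Disjoint.mono (Set.iInter_subset _ j) (Set.iInter_subset _ j)
    (Disjoint.preimage _ (hQd hj))

lemma exists_mem_Q (hQc : (⋃ i, Q i) = Set.univ) (y : X) : ∃ i, y ∈ Q i :=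
  Set.mem_iUnion.mp (hQc ▸ Set.mem_univ y)

lemma jf_cover (hQc : (⋃ i, Q i) = Set.univ) (E : Finset ℕ) :
    ⋃ c, jf S Q E c = Set.univ := by
  ext x
  simp only [Set.mem_iUnion, Set.mem_univ, iff_true]
  choose f hf using exists_mem_Q hQc
  exact ⟨fun j => f (S^[(j : ℕ)] x), Set.mem_iInter.mpr fun j => Set.mem_preimage.mpr (hf _)⟩

lemma sum_meas_inter {ι : Type*} [Fintype ι] (ν : Measure X) {q : ι → Set X}
    (hm : ∀ i, MeasurableSet (q i)) (hd : Pairwise (Function.onFun Disjoint q))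
    (hc : ⋃ i, q i = Set.univ) {s : Set X} (hs : MeasurableSet s) :
    ∑ i, ν (s ∩ q i) = ν s := by
  have h1 : s = ⋃ i, s ∩ q i := by rw [← Set.inter_iUnion, hc, Set.inter_univ]
  have h2 : ν (⋃ i, s ∩ q i) = ∑' i, ν (s ∩ q i) :=
    measure_iUnion (hd.mono fun i j h => h.mono Set.inter_subset_right Set.inter_subset_right)
      (fun i => hs.inter (hm i))
  rw [tsum_fintype] at h2
  conv_rhs => rw [h1]
  exact h2.symm

lemma sum_toReal_meas_inter {ι : Type*} [Fintype ι] (ν : Measure X) [IsFiniteMeasure ν]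
    {q : ι → Set X}
    (hm : ∀ i, MeasurableSet (q i)) (hd : Pairwise (Function.onFun Disjoint q))
    (hc : ⋃ i, q i = Set.univ) {s : Set X} (hs : MeasurableSet s) :
    ∑ i, (ν (s ∩ q i)).toReal = (ν s).toReal := by
  rw [← ENNReal.toReal_sum (fun i _ => measure_ne_top ν _), sum_meas_inter ν hm hd hc hs]

lemma sum_toReal_meas {ι : Type*} [Fintype ι] (ν : Measure X) [IsProbabilityMeasure ν]
    {q : ι → Set X}
    (hm : ∀ i, MeasurableSet (q i)) (hd : Pairwise (Function.onFun Disjoint q))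
    (hc : ⋃ i, q i = Set.univ) :
    ∑ i, (ν (q i)).toReal = 1 := by
  have := sum_toReal_meas_inter ν hm hd hc MeasurableSet.univ
  simpa [measure_univ] using this

end Stmt6

namespace Stmt6
open Real Set

variable {X : Type*} [MeasurableSpace X] {k : ℕ} {S : X → X} {Q : Fin k → Set X}

lemma negMulLog_sum_le' {ι : Type*} (s : Finset ι) (p : ι → ℝ) (h0 : ∀ i ∈ s, 0 ≤ p i) :
    negMulLog (∑ i ∈ s, p i) ≤ ∑ i ∈ s, negMulLog (p i) := by
  have key : negMulLog (∑ i ∈ s, p i) = ∑ i ∈ s, -(p i * Real.log (∑ j ∈ s, p j)) := by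
    rw [negMulLog, neg_mul, Finset.sum_mul, ← Finset.sum_neg_distrib]
  rw [key]
  apply Finset.sum_le_sum
  intro i hi
  rcases eq_or_lt_of_le (h0 i hi) with h | h
  · simp [← h]
  · rw [negMulLog, neg_mul, neg_le_neg_iff]
    exact mul_le_mul_of_nonneg_left
      (Real.log_le_log h (Finset.single_le_sum h0 hi)) h.le

lemma sum_negMulLog_le_log_card {ι : Type*} [Fintype ι] (p : ι → ℝ) (h0 : ∀ i, 0 ≤ p i)
    (h1 : ∑ i, p i = 1) : ∑ i, negMulLog (p i) ≤ Real.log (Fintype.card ι) := by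
  have hnonempty : Nonempty ι := by
    by_contra h
    rw [not_nonempty_iff] at h
    rw [Fintype.sum_empty] at h1
    · norm_num at h1
  have hpos : (0:ℝ) < Fintype.card ι := by
    have := Fintype.card_pos (α := ι); positivity
  have hw : ∀ i ∈ Finset.univ (α := ι), (0:ℝ) ≤ (Fintype.card ι : ℝ)⁻¹ := fun _ _ => by positivity
  have hw1 : ∑ _i : ι, (Fintype.card ι : ℝ)⁻¹ = 1 := by
    simp [Finset.sum_const]
  have hjen := Real.concaveOn_negMulLog.le_map_sum hw hw1
    (p := p) (fun i _ => Set.mem_Ici.mpr (h0 i))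
  simp only [smul_eq_mul] at hjen
  have h2 : ∑ i : ι, (Fintype.card ι : ℝ)⁻¹ * p i = (Fintype.card ι : ℝ)⁻¹ := by
    rw [← Finset.mul_sum, h1, mul_one]
  rw [h2] at hjen
  have h3 : negMulLog ((Fintype.card ι : ℝ)⁻¹) = (Fintype.card ι : ℝ)⁻¹ * Real.log (Fintype.card ι) := by
    rw [negMulLog, Real.log_inv]; ring
  rw [h3, ← Finset.mul_sum] at hjen
  calc ∑ i, negMulLog (p i)
      = (Fintype.card ι : ℝ) * ((Fintype.card ι : ℝ)⁻¹ * ∑ i, negMulLog (p i)) := by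
        field_simp
    _ ≤ (Fintype.card ι : ℝ) * ((Fintype.card ι : ℝ)⁻¹ * Real.log (Fintype.card ι)) :=
        mul_le_mul_of_nonneg_left hjen hpos.le
    _ = Real.log (Fintype.card ι) := by field_simp

lemma ent_pair_le {ι κ : Type*} [Fintype ι] [Fintype κ] (M : ι → κ → ℝ)
    (h0 : ∀ i j, 0 ≤ M i j) (htot : ∑ i, ∑ j, M i j = 1) :
    ∑ i, ∑ j, negMulLog (M i j) ≤
      (∑ i, negMulLog (∑ j, M i j)) + ∑ j, negMulLog (∑ i, M i j) := by
  classical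
  set P : ι → ℝ := fun i => ∑ j, M i j with hP
  set Qq : κ → ℝ := fun j => ∑ i, M i j with hQq
  have hP0 : ∀ i, 0 ≤ P i := fun i => Finset.sum_nonneg fun j _ => h0 i j
  have hQtot : ∑ j, Qq j = 1 := by rw [hQq]; rw [Finset.sum_comm]; exact htot
  have hQ0 : ∀ j, 0 ≤ Qq j := fun j => Finset.sum_nonneg fun i _ => h0 i j
  set r : ι → κ → ℝ := fun i j => if P i = 0 then Qq j else M i j / P i with hr
  have hr0 : ∀ i j, 0 ≤ r i j := by
    intro i j; rw [hr]; dsimp only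
    split
    · exact hQ0 j
    · exact div_nonneg (h0 i j) (hP0 i)
  have hMzero : ∀ i, P i = 0 → ∀ j, M i j = 0 := by
    intro i hPi j
    exact le_antisymm (by
      calc M i j ≤ ∑ j', M i j' := Finset.single_le_sum (fun j' _ => h0 i j') (Finset.mem_univ j)
        _ = 0 := hPi) (h0 i j)
  have hMP : ∀ i j, M i j = P i * r i j := by
    intro i j; rw [hr]; dsimp only
    split
    · next h => rw [h, zero_mul]; exact hMzero i h j
    · next h => field_simp
  have hrsum : ∀ i, ∑ j, r i j = 1 := by
    intro i; rw [hr]; dsimp only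
    split
    · exact hQtot
    · next h => rw [← Finset.sum_div]; exact div_self h
  have hQr : ∀ j, ∑ i, P i * r i j = Qq j := by
    intro j; rw [hQq]; dsimp only; exact Finset.sum_congr rfl fun i _ => (hMP i _).symm
  have hPtot : ∑ i, P i = 1 := htot
  have expand : ∀ i, ∑ j, negMulLog (M i j) =
      negMulLog (P i) + ∑ j, P i * negMulLog (r i j) := by
    intro i
    calc ∑ j, negMulLog (M i j) = ∑ j, (r i j * negMulLog (P i) + P i * negMulLog (r i j)) := by
          refine Finset.sum_congr rfl fun j _ => ?_
          rw [hMP i j, negMulLog_mul]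
      _ = (∑ j, r i j) * negMulLog (P i) + ∑ j, P i * negMulLog (r i j) := by
          rw [Finset.sum_add_distrib, Finset.sum_mul]
      _ = negMulLog (P i) + ∑ j, P i * negMulLog (r i j) := by rw [hrsum i, one_mul]
  have jensen : ∀ j, ∑ i, P i * negMulLog (r i j) ≤ negMulLog (Qq j) := by
    intro j
    have := Real.concaveOn_negMulLog.le_map_sum (t := Finset.univ) (w := P)
      (p := fun i => r i j) (fun i _ => hP0 i) hPtot (fun i _ => Set.mem_Ici.mpr (hr0 i j))
    simp only [smul_eq_mul] at this
    rw [hQr j] at this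
    exact this
  calc ∑ i, ∑ j, negMulLog (M i j)
      = ∑ i, negMulLog (P i) + ∑ i, ∑ j, P i * negMulLog (r i j) := by
        rw [← Finset.sum_add_distrib]; exact Finset.sum_congr rfl fun i _ => expand i
    _ = ∑ i, negMulLog (P i) + ∑ j, ∑ i, P i * negMulLog (r i j) := by rw [Finset.sum_comm]
    _ ≤ ∑ i, negMulLog (P i) + ∑ j, negMulLog (Qq j) :=
        add_le_add le_rfl (Finset.sum_le_sum fun j _ => jensen j)

lemma entJoinF_nonneg (ν : Measure X) [IsProbabilityMeasure ν] (E : Finset ℕ) :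
    0 ≤ entJoinF ν S Q E :=
  Finset.sum_nonneg fun c _ => Real.negMulLog_nonneg ENNReal.toReal_nonneg
    (by simpa using ENNReal.toReal_mono ENNReal.one_ne_top prob_le_one)

lemma entJoinF_card_le (hS : Measurable S) (hQ : (∀ i, MeasurableSet (Q i)) ∧
      (Pairwise fun i j => Disjoint (Q i) (Q j)) ∧ (⋃ i, Q i) = Set.univ)
    (ν : Measure X) [IsProbabilityMeasure ν] (E : Finset ℕ) :
    entJoinF ν S Q E ≤ (E.card : ℝ) * Real.log k := by
  classical
  have htot : ∑ c, (ν (jf S Q E c)).toReal = 1 :=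
    sum_toReal_meas ν (jf_meas hS hQ.1 E) (jf_disj hQ.2.1 E) (jf_cover hQ.2.2 E)
  have h := sum_negMulLog_le_log_card (fun c => (ν (jf S Q E c)).toReal)
    (fun c => ENNReal.toReal_nonneg) htot
  rw [entJoinF_def]
  refine h.trans ?_
  have hcard : Fintype.card ({j // j ∈ E} → Fin k) = k ^ E.card := by
    rw [Fintype.card_fun, Fintype.card_fin, Fintype.card_coe]
  rw [hcard]
  push_cast
  rw [Real.log_pow]

end Stmt6

namespace Stmt6
open Real Set

variable {X : Type*} [MeasurableSpace X] {k : ℕ} {S : X → X} {Q : Fin k → Set X}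

lemma ent_refine_meas {ι κ : Type*} [Fintype ι] [Fintype κ] [DecidableEq ι] (ν : Measure X)
    [IsFiniteMeasure ν] {p : ι → Set X} {q : κ → Set X} (f : κ → ι)
    (hfib : ∀ i, ν (p i) = ∑ c ∈ Finset.univ.filter (fun c => f c = i), ν (q c)) :
    ∑ i, negMulLog ((ν (p i)).toReal) ≤ ∑ c, negMulLog ((ν (q c)).toReal) := by
  calc ∑ i, negMulLog ((ν (p i)).toReal)
      ≤ ∑ i, ∑ c ∈ Finset.univ.filter (fun c => f c = i), negMulLog ((ν (q c)).toReal) := by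
        refine Finset.sum_le_sum fun i _ => ?_
        rw [hfib i, ENNReal.toReal_sum (fun c _ => measure_ne_top ν _)]
        exact negMulLog_sum_le' _ _ (fun c _ => ENNReal.toReal_nonneg)
    _ = ∑ c, negMulLog ((ν (q c)).toReal) :=
        Finset.sum_fiberwise_of_maps_to (fun c _ => Finset.mem_univ (f c)) _

lemma entJoinF_mono (hS : Measurable S) (hQ : (∀ i, MeasurableSet (Q i)) ∧
      (Pairwise fun i j => Disjoint (Q i) (Q j)) ∧ (⋃ i, Q i) = Set.univ)
    (ν : Measure X) [IsProbabilityMeasure ν] {A B : Finset ℕ} (hAB : A ⊆ B) :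
    entJoinF ν S Q A ≤ entJoinF ν S Q B := by
  classical
  rw [entJoinF_def, entJoinF_def]
  set f : ({j // j ∈ B} → Fin k) → ({j // j ∈ A} → Fin k) :=
    fun c j => c ⟨j.1, hAB j.2⟩ with hf
  refine ent_refine_meas ν f (fun i => ?_)
  have key : jf S Q A i =
      ⋃ c ∈ Finset.univ.filter (fun c => f c = i), jf S Q B c := by
    apply subset_antisymm
    · intro x hx
      choose g hg using exists_mem_Q hQ.2.2
      set c : {j // j ∈ B} → Fin k := fun j => g (S^[(j : ℕ)] x) with hc
      have hmem : x ∈ jf S Q B c := Set.mem_iInter.mpr fun j => Set.mem_preimage.mpr (hg _)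
      have hfc : f c = i := by
        funext j
        have h1 : S^[(j : ℕ)] x ∈ Q (f c j) := hg _
        have h2 : S^[(j : ℕ)] x ∈ Q (i j) := Set.mem_iInter.mp hx j
        by_contra hne
        exact Set.disjoint_left.mp (hQ.2.1 hne) h1 h2
      exact Set.mem_biUnion (Finset.mem_filter.mpr ⟨Finset.mem_univ _, hfc⟩) hmem
    · intro x hx
      simp only [Set.mem_iUnion, exists_prop] at hx
      obtain ⟨c, hcmem, hxc⟩ := hx
      have hci : f c = i := (Finset.mem_filter.mp hcmem).2
      refine Set.mem_iInter.mpr fun j => ?_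
      have := Set.mem_iInter.mp hxc ⟨j.1, hAB j.2⟩
      rw [← hci]
      exact this
  rw [key, measure_biUnion_finset
    (fun c _ c' _ hne => jf_disj hQ.2.1 B hne)
    (fun c _ => jf_meas hS hQ.1 B c)]

lemma entJoinF_union (hS : Measurable S) (hQ : (∀ i, MeasurableSet (Q i)) ∧
      (Pairwise fun i j => Disjoint (Q i) (Q j)) ∧ (⋃ i, Q i) = Set.univ)
    (ν : Measure X) [IsProbabilityMeasure ν] {A B : Finset ℕ} (hd : Disjoint A B) :
    entJoinF ν S Q (A ∪ B) ≤ entJoinF ν S Q A + entJoinF ν S Q B := by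
  classical
  set M : ({j // j ∈ A} → Fin k) → ({j // j ∈ B} → Fin k) → ℝ :=
    fun a b => (ν (jf S Q A a ∩ jf S Q B b)).toReal with hM
  have h0 : ∀ a b, 0 ≤ M a b := fun a b => ENNReal.toReal_nonneg
  have hrow : ∀ a, ∑ b, M a b = (ν (jf S Q A a)).toReal := fun a =>
    sum_toReal_meas_inter ν (jf_meas hS hQ.1 B) (jf_disj hQ.2.1 B) (jf_cover hQ.2.2 B)
      (jf_meas hS hQ.1 A a)
  have hcol : ∀ b, ∑ a, M a b = (ν (jf S Q B b)).toReal := by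
    intro b
    have : ∀ a, M a b = (ν (jf S Q B b ∩ jf S Q A a)).toReal := fun a => by
      rw [hM]; dsimp only; rw [Set.inter_comm]
    rw [Finset.sum_congr rfl fun a _ => this a]
    exact sum_toReal_meas_inter ν (jf_meas hS hQ.1 A) (jf_disj hQ.2.1 A) (jf_cover hQ.2.2 A)
      (jf_meas hS hQ.1 B b)
  have htot : ∑ a, ∑ b, M a b = 1 := by
    rw [Finset.sum_congr rfl fun a _ => hrow a]
    exact sum_toReal_meas ν (jf_meas hS hQ.1 A) (jf_disj hQ.2.1 A) (jf_cover hQ.2.2 A)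
  have key := ent_pair_le M h0 htot
  -- identify the three sums
  set F : ({j // j ∈ A ∪ B} → Fin k) → ({j // j ∈ A} → Fin k) × ({j // j ∈ B} → Fin k) :=
    fun c => (fun j => c ⟨j.1, Finset.mem_union_left B j.2⟩,
              fun j => c ⟨j.1, Finset.mem_union_right A j.2⟩) with hF
  have hFbij : Function.Bijective F := by
    rw [Function.bijective_iff_has_inverse]
    refine ⟨fun p j => if h : j.1 ∈ A then p.1 ⟨j.1, h⟩
      else p.2 ⟨j.1, (Finset.mem_union.mp j.2).resolve_left h⟩, ?_, ?_⟩
    · intro c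
      funext j
      dsimp only [hF]
      split
      · exact congrArg c (Subtype.ext rfl)
      · exact congrArg c (Subtype.ext rfl)
    · intro p
      refine Prod.ext ?_ ?_
      · funext j
        dsimp only [hF]
        show (if h : j.1 ∈ A then p.1 ⟨j.1, h⟩ else _) = p.1 j
        rw [dif_pos j.2]
      · funext j
        dsimp only [hF]
        show (if h : j.1 ∈ A then _ else p.2 ⟨j.1, (Finset.mem_union.mp (Finset.mem_union_right A j.2)).resolve_left h⟩) = p.2 j
        rw [dif_neg (Finset.disjoint_right.mp hd j.2)]
  have hatom : ∀ c, jf S Q (A ∪ B) c = jf S Q A (F c).1 ∩ jf S Q B (F c).2 := by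
    intro c
    ext x
    simp only [jf, Set.mem_inter_iff, Set.mem_iInter]
    constructor
    · intro h
      exact ⟨fun j => h ⟨j.1, Finset.mem_union_left B j.2⟩,
             fun j => h ⟨j.1, Finset.mem_union_right A j.2⟩⟩
    · rintro ⟨hA, hB⟩ j
      rcases Finset.mem_union.mp j.2 with h | h
      · have heq : (⟨j.1, Finset.mem_union_left B h⟩ : {j // j ∈ A ∪ B}) = j := Subtype.ext rfl
        have := hA ⟨j.1, h⟩
        exact this
      · have heq : (⟨j.1, Finset.mem_union_right A h⟩ : {j // j ∈ A ∪ B}) = j := Subtype.ext rfl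
        have := hB ⟨j.1, h⟩
        exact this
  have hL : entJoinF ν S Q (A ∪ B) = ∑ p : ({j // j ∈ A} → Fin k) × ({j // j ∈ B} → Fin k),
      negMulLog (M p.1 p.2) := by
    rw [entJoinF_def]
    exact Fintype.sum_bijective F hFbij _ _ (fun c => by rw [hatom c])
  rw [hL, Fintype.sum_prod_type, entJoinF_def, entJoinF_def]
  refine key.trans (add_le_add ?_ ?_)
  · exact le_of_eq (Finset.sum_congr rfl fun a _ => by rw [hrow a])
  · exact le_of_eq (Finset.sum_congr rfl fun b _ => by rw [hcol b])

lemma entJoinF_empty (ν : Measure X) [IsProbabilityMeasure ν] :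
    entJoinF ν S Q ∅ = 0 := by
  rw [entJoinF_def]
  haveI : IsEmpty {j // j ∈ (∅ : Finset ℕ)} := ⟨fun j => Finset.notMem_empty _ j.2⟩
  have : ∀ c : {j // j ∈ (∅ : Finset ℕ)} → Fin k, jf S Q ∅ c = Set.univ := fun c =>
    Set.iInter_of_empty _
  rw [Finset.sum_congr rfl fun c _ => by rw [this c, measure_univ]]
  simp

lemma entJoinF_biUnion (hS : Measurable S) (hQ : (∀ i, MeasurableSet (Q i)) ∧
      (Pairwise fun i j => Disjoint (Q i) (Q j)) ∧ (⋃ i, Q i) = Set.univ)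
    (ν : Measure X) [IsProbabilityMeasure ν] (s : Finset ℕ) (f : ℕ → Finset ℕ)
    (hd : (↑s : Set ℕ).PairwiseDisjoint f) :
    entJoinF ν S Q (s.biUnion f) ≤ ∑ j ∈ s, entJoinF ν S Q (f j) := by
  classical
  induction s using Finset.cons_induction with
  | empty => rw [Finset.biUnion_empty, Finset.sum_empty, entJoinF_empty]
  | cons a s ha ih =>
    rw [Finset.cons_eq_insert, Finset.biUnion_insert, Finset.sum_insert ha]
    have hdisj : Disjoint (f a) (s.biUnion f) := by
      rw [Finset.disjoint_biUnion_right]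
      intro j hj
      exact hd (by simp) (by simp [hj]) (fun h => ha (h ▸ hj))
    calc entJoinF ν S Q (f a ∪ s.biUnion f)
        ≤ entJoinF ν S Q (f a) + entJoinF ν S Q (s.biUnion f) :=
          entJoinF_union hS hQ ν hdisj
      _ ≤ entJoinF ν S Q (f a) + ∑ j ∈ s, entJoinF ν S Q (f j) := by
          refine add_le_add le_rfl (ih (hd.subset ?_))
          intro x hx; simp [hx]

end Stmt6

namespace Stmt6
open Real Set MeasureTheory

variable {X : Type*} [MeasurableSpace X] {k : ℕ} {S : X → X} {Q : Fin k → Set X}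

lemma entJoinF_shift (hS : Measurable S) (hQm : ∀ i, MeasurableSet (Q i))
    (μ : Measure X) (j m : ℕ) :
    entJoinF μ S Q ((Finset.range m).image (· + j)) =
      entJoinF (Measure.map S^[j] μ) S Q (Finset.range m) := by
  classical
  have hmem : ∀ i : ℕ, i ∈ Finset.range m → i + j ∈ (Finset.range m).image (· + j) :=
    fun i hi => Finset.mem_image.mpr ⟨i, hi, rfl⟩
  have hsub : ∀ i' : ℕ, i' ∈ (Finset.range m).image (· + j) → j ≤ i' ∧ i' - j ∈ Finset.range m := by
    intro i' hi'
    obtain ⟨a, ha, hav⟩ := Finset.mem_image.mp hi'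
    constructor
    · omega
    · have : i' - j = a := by omega
      rw [this]; exact ha
  set F : ({i // i ∈ Finset.range m} → Fin k) →
      ({i // i ∈ (Finset.range m).image (· + j)} → Fin k) :=
    fun c i => c ⟨i.1 - j, (hsub i.1 i.2).2⟩ with hF
  have hFbij : Function.Bijective F := by
    rw [Function.bijective_iff_has_inverse]
    refine ⟨fun d i => d ⟨i.1 + j, hmem i.1 i.2⟩, ?_, ?_⟩
    · intro c
      funext i
      dsimp only [hF]
      exact congrArg c (Subtype.ext (by simp))
    · intro d
      funext i
      dsimp only [hF]
      exact congrArg d (Subtype.ext (Nat.sub_add_cancel (hsub i.1 i.2).1))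
  have hatom : ∀ c, S^[j] ⁻¹' (jf S Q (Finset.range m) c) =
      jf S Q ((Finset.range m).image (· + j)) (F c) := by
    intro c
    ext x
    simp only [jf, Set.mem_preimage, Set.mem_iInter]
    constructor
    · intro h i'
      have h1 := h ⟨i'.1 - j, (hsub i'.1 i'.2).2⟩
      rw [← Function.iterate_add_apply, Nat.sub_add_cancel (hsub i'.1 i'.2).1] at h1
      exact h1
    · intro h i
      have h1 := h ⟨i.1 + j, hmem i.1 i.2⟩
      have h2 : F c ⟨i.1 + j, hmem i.1 i.2⟩ = c i := congrArg c (Subtype.ext (by simp))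
      rw [h2, Function.iterate_add_apply] at h1
      exact h1
  rw [entJoinF_def, entJoinF_def]
  refine (Fintype.sum_bijective F hFbij _ _ (fun c => ?_)).symm
  rw [Measure.map_apply (hS.iterate j) (jf_meas hS hQm _ c), hatom c]

lemma entJoinF_avg (hS : Measurable S) (hQm : ∀ i, MeasurableSet (Q i))
    (μ : Measure X) [IsProbabilityMeasure μ] (E : Finset ℕ) (hE : E.Nonempty)
    (μE : Measure X)
    (hμE : μE = (E.card : ℝ≥0∞)⁻¹ • ∑ j ∈ E, Measure.map (S^[j]) μ) (F : Finset ℕ) :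
    ∑ j ∈ E, (E.card : ℝ)⁻¹ * entJoinF (Measure.map (S^[j]) μ) S Q F ≤ entJoinF μE S Q F := by
  classical
  have hcard : (0 : ℝ) < E.card := by
    exact_mod_cast Finset.card_pos.mpr hE
  have hmap : ∀ (j : ℕ) (A : Set X), MeasurableSet A →
      (Measure.map (S^[j]) μ) A = μ (S^[j] ⁻¹' A) := fun j A hA =>
    Measure.map_apply (hS.iterate j) hA
  have hkey : ∀ c : {i // i ∈ F} → Fin k,
      (μE (jf S Q F c)).toReal =
        ∑ j ∈ E, (E.card : ℝ)⁻¹ * ((Measure.map (S^[j]) μ) (jf S Q F c)).toReal := by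
    intro c
    have hms := jf_meas hS hQm F c
    rw [hμE, Measure.smul_apply, smul_eq_mul, Measure.finset_sum_apply,
      ENNReal.toReal_mul,
      ENNReal.toReal_sum (fun j _ => by rw [hmap j _ hms]; exact measure_ne_top μ _),
      ENNReal.toReal_inv, ENNReal.toReal_natCast, Finset.mul_sum]
  rw [entJoinF_def]
  have hswap : ∑ j ∈ E, (E.card : ℝ)⁻¹ * entJoinF (Measure.map (S^[j]) μ) S Q F
      = ∑ c : {i // i ∈ F} → Fin k, ∑ j ∈ E,
          (E.card : ℝ)⁻¹ * negMulLog ((Measure.map (S^[j]) μ) (jf S Q F c)).toReal := by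
    rw [Finset.sum_comm]
    refine Finset.sum_congr rfl fun j _ => ?_
    rw [entJoinF_def, Finset.mul_sum]
  rw [hswap]
  refine Finset.sum_le_sum fun c _ => ?_
  have hjen := Real.concaveOn_negMulLog.le_map_sum (t := E) (w := fun _ => (E.card : ℝ)⁻¹)
    (p := fun j => ((Measure.map (S^[j]) μ) (jf S Q F c)).toReal)
    (fun j _ => by positivity)
    (by rw [Finset.sum_const, nsmul_eq_mul]; field_simp)
    (fun j _ => Set.mem_Ici.mpr ENNReal.toReal_nonneg)
  simp only [smul_eq_mul] at hjen
  rw [← hkey c] at hjen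
  exact hjen

end Stmt6

namespace Stmt6
open Finset

lemma exists_boundary {E : Finset ℕ} {m i a : ℕ} (hm : 1 ≤ m) (hiE : i ∈ E) (ham : a < m)
    (hbad : ¬ ∃ j ∈ E, j % m = a ∧ j ≤ i ∧ i < j + m) :
    ∃ b ∈ E \ E.image (· + 1), b ≤ i ∧ i < b + m := by
  classical
  set s := (Finset.range (i + 1)).filter (fun t => Finset.Icc t i ⊆ E) with hsdef
  have his : i ∈ s := by
    refine Finset.mem_filter.mpr ⟨Finset.mem_range.mpr (by omega), ?_⟩
    intro x hx
    rw [Finset.mem_Icc] at hx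
    have : x = i := by omega
    rw [this]; exact hiE
  have hne : s.Nonempty := ⟨i, his⟩
  set b := s.min' hne with hbdef
  have hbs : b ∈ s := s.min'_mem hne
  have hbi : b ≤ i := by
    have := (Finset.mem_filter.mp hbs).1
    rw [Finset.mem_range] at this; omega
  have hsub : Finset.Icc b i ⊆ E := (Finset.mem_filter.mp hbs).2
  have hbE : b ∈ E := hsub (Finset.mem_Icc.mpr ⟨le_refl b, hbi⟩)
  have hbB : b ∈ E \ E.image (· + 1) := by
    rw [Finset.mem_sdiff]
    refine ⟨hbE, fun hmem => ?_⟩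
    obtain ⟨t, htE, ht⟩ := Finset.mem_image.mp hmem
    have hts : t ∈ s := by
      refine Finset.mem_filter.mpr ⟨Finset.mem_range.mpr (by omega), ?_⟩
      intro x hx
      rw [Finset.mem_Icc] at hx
      rcases eq_or_lt_of_le hx.1 with h | h
      · rw [← h]; exact htE
      · exact hsub (Finset.mem_Icc.mpr ⟨by omega, hx.2⟩)
    have := s.min'_le t hts
    omega
  refine ⟨b, hbB, hbi, ?_⟩
  by_contra hlt
  push_neg at hlt
  -- hlt : b + m ≤ i
  exfalso
  apply hbad
  have hmod : (a + m * ((i - a) / m)) % m = a := by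
    rw [Nat.add_mul_mod_self_left]
    exact Nat.mod_eq_of_lt ham
  have h2 : m * ((i - a) / m) + (i - a) % m = i - a := Nat.div_add_mod _ _
  have h3 : (i - a) % m < m := Nat.mod_lt _ (by omega)
  set M := m * ((i - a) / m) with hM
  set j := a + M with hj
  have hji : j ≤ i := by omega
  have hij : i < j + m := by omega
  refine ⟨j, hsub (Finset.mem_Icc.mpr ⟨by omega, hji⟩), hmod, hji, hij⟩

lemma counting (E : Finset ℕ) (m : ℕ) (hm : 1 ≤ m) :
    ∑ a ∈ Finset.range m,
        (E.filter (fun i => ¬ ∃ j ∈ E, j % m = a ∧ j ≤ i ∧ i < j + m)).card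
      ≤ m * m * (E \ E.image (· + 1)).card := by
  classical
  set B := E \ E.image (· + 1) with hB
  calc ∑ a ∈ Finset.range m,
        (E.filter (fun i => ¬ ∃ j ∈ E, j % m = a ∧ j ≤ i ∧ i < j + m)).card
      = ∑ a ∈ Finset.range m, ∑ i ∈ E,
          (if ¬ ∃ j ∈ E, j % m = a ∧ j ≤ i ∧ i < j + m then 1 else 0) := by
        refine Finset.sum_congr rfl fun a _ => ?_
        rw [Finset.card_filter]
    _ = ∑ i ∈ E, ∑ a ∈ Finset.range m,
          (if ¬ ∃ j ∈ E, j % m = a ∧ j ≤ i ∧ i < j + m then 1 else 0) := Finset.sum_comm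
    _ ≤ ∑ i ∈ E, m * (B.filter (fun b => b ≤ i ∧ i < b + m)).card := by
        refine Finset.sum_le_sum fun i hi => ?_
        by_cases hbad : ∃ a ∈ Finset.range m, ¬ ∃ j ∈ E, j % m = a ∧ j ≤ i ∧ i < j + m
        · obtain ⟨a, ham, ha⟩ := hbad
          obtain ⟨b, hbB, hb1, hb2⟩ :=
            exists_boundary hm hi (Finset.mem_range.mp ham) ha
          have hcard1 : 1 ≤ (B.filter (fun b => b ≤ i ∧ i < b + m)).card := by
            rw [Nat.one_le_iff_ne_zero, Ne, Finset.card_eq_zero, ← Finset.not_nonempty_iff_eq_empty,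
              not_not]
            exact ⟨b, Finset.mem_filter.mpr ⟨hbB, hb1, hb2⟩⟩
          calc ∑ a ∈ Finset.range m,
                (if ¬ ∃ j ∈ E, j % m = a ∧ j ≤ i ∧ i < j + m then 1 else 0)
              ≤ ∑ _a ∈ Finset.range m, 1 :=
                Finset.sum_le_sum fun a _ => by split <;> omega
            _ = m := by simp
            _ ≤ m * (B.filter (fun b => b ≤ i ∧ i < b + m)).card := by
                nlinarith
        · push_neg at hbad
          have : ∀ a ∈ Finset.range m,
              (if ¬ ∃ j ∈ E, j % m = a ∧ j ≤ i ∧ i < j + m then 1 else 0) = 0 := by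
            intro a ha
            rw [if_neg]
            rw [not_not]
            exact hbad a ha
          rw [Finset.sum_congr rfl this]
          simp
    _ = m * ∑ i ∈ E, (B.filter (fun b => b ≤ i ∧ i < b + m)).card := by
        rw [Finset.mul_sum]
    _ = m * ∑ b ∈ B, (E.filter (fun i => b ≤ i ∧ i < b + m)).card := by
        congr 1
        calc ∑ i ∈ E, (B.filter (fun b => b ≤ i ∧ i < b + m)).card
            = ∑ i ∈ E, ∑ b ∈ B, (if b ≤ i ∧ i < b + m then 1 else 0) := by
              refine Finset.sum_congr rfl fun i _ => ?_; rw [Finset.card_filter]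
          _ = ∑ b ∈ B, ∑ i ∈ E, (if b ≤ i ∧ i < b + m then 1 else 0) := Finset.sum_comm
          _ = ∑ b ∈ B, (E.filter (fun i => b ≤ i ∧ i < b + m)).card := by
              refine Finset.sum_congr rfl fun b _ => ?_; rw [Finset.card_filter]
    _ ≤ m * ∑ _b ∈ B, m := by
        refine Nat.mul_le_mul_left m (Finset.sum_le_sum fun b _ => ?_)
        calc (E.filter (fun i => b ≤ i ∧ i < b + m)).card
            ≤ (Finset.Ico b (b + m)).card := by
              refine Finset.card_le_card fun i hi => ?_
              rw [Finset.mem_Ico]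
              exact (Finset.mem_filter.mp hi).2
          _ = m := by rw [Nat.card_Ico]; omega
    _ = m * m * B.card := by rw [Finset.sum_const, smul_eq_mul]; ring
end Stmt6

theorem stmt6 {X : Type*} [MetricSpace X] [CompactSpace X] [MeasurableSpace X] [BorelSpace X]
    (T : X ≃ₜ X) (μ : Measure X) [IsProbabilityMeasure μ]
    (E : Finset ℕ) (hE : E.Nonempty)
    {k : ℕ} (Q : Fin k → Set X) (hQ : IsFinPartition Q)
    (m : ℕ) (hm : 1 ≤ m)
    (μE : Measure X)
    (hμE : μE = (E.card : ℝ≥0∞)⁻¹ • ∑ j ∈ E, Measure.map ((⇑T)^[j]) μ) :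
    (1 / (E.card : ℝ)) * entJoinF μ (⇑T) Q E ≤
      (1 / (m : ℝ)) * entJoinF μE (⇑T) Q (Finset.range m)
        + 6 * (m : ℝ) * (((symmDiff (E.image (· + 1)) E).card : ℝ) / (E.card : ℝ))
            * Real.log k := by
  classical
  have hQ' : (∀ i, MeasurableSet (Q i)) ∧
      (Pairwise fun i j => Disjoint (Q i) (Q j)) ∧ (⋃ i, Q i) = Set.univ := hQ
  set S : X → X := ⇑T with hSdef
  have hS : Measurable S := T.continuous.measurable
  have hN0 : 0 < E.card := Finset.card_pos.mpr hE
  have hNR : (0:ℝ) < E.card := by exact_mod_cast hN0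
  have hmR : (0:ℝ) < m := by exact_mod_cast hm
  haveI hμEP : IsProbabilityMeasure μE := by
    constructor
    rw [hμE, Measure.smul_apply, smul_eq_mul, Measure.finset_sum_apply]
    have hone : ∀ j ∈ E, (Measure.map (S^[j]) μ) Set.univ = 1 := fun j _ => by
      haveI := Measure.isProbabilityMeasure_map (μ := μ) (f := S^[j]) (hS.iterate j).aemeasurable
      exact measure_univ
    rw [Finset.sum_congr rfl hone, Finset.sum_const, nsmul_eq_mul, mul_one]
    exact ENNReal.inv_mul_cancel (by exact_mod_cast hN0.ne') (ENNReal.natCast_ne_top _)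
  have hX : Nonempty X := by
    by_contra h
    rw [not_nonempty_iff] at h
    have h1 := measure_univ (μ := μ)
    rw [Set.univ_eq_empty_iff.mpr h, measure_empty] at h1
    exact zero_ne_one h1
  obtain ⟨x0⟩ := hX
  obtain ⟨i0, -⟩ := Stmt6.exists_mem_Q hQ'.2.2 x0
  have hlogk : 0 ≤ Real.log k := Real.log_nonneg (by exact_mod_cast i0.pos)
  have step : ∀ a ∈ Finset.range m, entJoinF μ S Q E ≤
      (∑ j ∈ E.filter (fun j => j % m = a),
        entJoinF (Measure.map (S^[j]) μ) S Q (Finset.range m))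
      + ((E.filter (fun i => ¬ ∃ j ∈ E, j % m = a ∧ j ≤ i ∧ i < j + m)).card : ℝ)
          * Real.log k := by
    intro a _
    set Ea := E.filter (fun j => j % m = a) with hEa
    set Ra := E.filter (fun i => ¬ ∃ j ∈ E, j % m = a ∧ j ≤ i ∧ i < j + m) with hRa
    have hblock : ∀ (j x : ℕ), x ∈ (Finset.range m).image (· + j) ↔ j ≤ x ∧ x < j + m := by
      intro j x
      rw [Finset.mem_image]
      constructor
      · rintro ⟨t, ht, rfl⟩
        rw [Finset.mem_range] at ht
        omega
      · rintro ⟨h1, h2⟩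
        exact ⟨x - j, Finset.mem_range.mpr (by omega), by omega⟩
    have hcover : E ⊆ Ea.biUnion (fun j => (Finset.range m).image (· + j)) ∪ Ra := by
      intro i hi
      by_cases hex : ∃ j ∈ E, j % m = a ∧ j ≤ i ∧ i < j + m
      · obtain ⟨j, hjE, hjm, hji, hij⟩ := hex
        exact Finset.mem_union_left _ (Finset.mem_biUnion.mpr
          ⟨j, Finset.mem_filter.mpr ⟨hjE, hjm⟩, (hblock j i).mpr ⟨hji, hij⟩⟩)
      · exact Finset.mem_union_right _ (Finset.mem_filter.mpr ⟨hi, hex⟩)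
    have hdb : (↑Ea : Set ℕ).PairwiseDisjoint (fun j => (Finset.range m).image (· + j)) := by
      intro j hj j' hj' hne
      have hj2 := Finset.mem_filter.mp (Finset.mem_coe.mp hj)
      have hj'2 := Finset.mem_filter.mp (Finset.mem_coe.mp hj')
      simp only [Function.onFun]
      rw [Finset.disjoint_left]
      intro x hx hx'
      rw [hblock] at hx hx'
      have hmm : (max j j' - min j j') % m = 0 := by
        rcases le_total j j' with h | h
        · rw [max_eq_right h, min_eq_left h]
          exact Nat.sub_mod_eq_zero_of_mod_eq (hj'2.2.trans hj2.2.symm)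
        · rw [max_eq_left h, min_eq_right h]
          exact Nat.sub_mod_eq_zero_of_mod_eq (hj2.2.trans hj'2.2.symm)
      rw [Nat.mod_eq_of_lt (by omega)] at hmm
      omega
    have hdR : Disjoint (Ea.biUnion (fun j => (Finset.range m).image (· + j))) Ra := by
      rw [Finset.disjoint_left]
      intro x hx hxR
      obtain ⟨j, hjEa, hxj⟩ := Finset.mem_biUnion.mp hx
      rw [hblock] at hxj
      obtain ⟨hjE, hjm⟩ := Finset.mem_filter.mp hjEa
      exact (Finset.mem_filter.mp hxR).2 ⟨j, hjE, hjm, hxj.1, hxj.2⟩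
    calc entJoinF μ S Q E
        ≤ entJoinF μ S Q (Ea.biUnion (fun j => (Finset.range m).image (· + j)) ∪ Ra) :=
          Stmt6.entJoinF_mono hS hQ' μ hcover
      _ ≤ entJoinF μ S Q (Ea.biUnion (fun j => (Finset.range m).image (· + j)))
            + entJoinF μ S Q Ra := Stmt6.entJoinF_union hS hQ' μ hdR
      _ ≤ (∑ j ∈ Ea, entJoinF μ S Q ((Finset.range m).image (· + j))) + entJoinF μ S Q Ra :=
          add_le_add (Stmt6.entJoinF_biUnion hS hQ' μ Ea _ hdb) le_rfl
      _ = (∑ j ∈ Ea, entJoinF (Measure.map (S^[j]) μ) S Q (Finset.range m))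
            + entJoinF μ S Q Ra := by
          rw [Finset.sum_congr rfl fun j _ => Stmt6.entJoinF_shift hS hQ'.1 μ j m]
      _ ≤ (∑ j ∈ Ea, entJoinF (Measure.map (S^[j]) μ) S Q (Finset.range m))
            + (Ra.card : ℝ) * Real.log k :=
          add_le_add le_rfl (Stmt6.entJoinF_card_le hS hQ' μ Ra)
  set g : ℕ → ℝ := fun j => entJoinF (Measure.map (S^[j]) μ) S Q (Finset.range m) with hg
  set C : ℕ := ∑ a ∈ Finset.range m,
      (E.filter (fun i => ¬ ∃ j ∈ E, j % m = a ∧ j ≤ i ∧ i < j + m)).card with hC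
  have hsum : (m : ℝ) * entJoinF μ S Q E ≤ (∑ j ∈ E, g j) + (C : ℝ) * Real.log k := by
    have h1 := Finset.sum_le_sum step
    rw [Finset.sum_const, Finset.card_range, nsmul_eq_mul, Finset.sum_add_distrib] at h1
    have h2 : ∑ a ∈ Finset.range m, ∑ j ∈ E.filter (fun j => j % m = a), g j = ∑ j ∈ E, g j :=
      Finset.sum_fiberwise_of_maps_to (fun j _ => Finset.mem_range.mpr (Nat.mod_lt j (by omega))) g
    have h3 : ∑ a ∈ Finset.range m,
        ((E.filter (fun i => ¬ ∃ j ∈ E, j % m = a ∧ j ≤ i ∧ i < j + m)).card : ℝ) * Real.log k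
        = (C : ℝ) * Real.log k := by
      rw [← Finset.sum_mul, hC]
      push_cast
      ring
    rw [h2, h3] at h1
    exact h1
  have hc2 : ∑ j ∈ E, g j ≤ (E.card : ℝ) * entJoinF μE S Q (Finset.range m) := by
    have h := Stmt6.entJoinF_avg hS hQ'.1 μ E hE μE hμE (Finset.range m)
    rw [← Finset.mul_sum] at h
    calc ∑ j ∈ E, g j = (E.card : ℝ) * ((E.card : ℝ)⁻¹ * ∑ j ∈ E, g j) := by field_simp
      _ ≤ (E.card : ℝ) * entJoinF μE S Q (Finset.range m) :=
          mul_le_mul_of_nonneg_left h hNR.le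
  set D : ℕ := (symmDiff (E.image (· + 1)) E).card with hD
  have hBD : (E \ E.image (· + 1)).card ≤ D := by
    apply Finset.card_le_card
    intro b hb
    rw [Finset.mem_symmDiff]
    rw [Finset.mem_sdiff] at hb
    exact Or.inr ⟨hb.1, hb.2⟩
  have hcount : (C : ℝ) ≤ (m : ℝ) * m * D := by
    have h1 := Stmt6.counting E m hm
    have h2 : C ≤ m * m * D := h1.trans (Nat.mul_le_mul_left _ hBD)
    exact_mod_cast h2
  have hH' : 0 ≤ entJoinF μE S Q (Finset.range m) := Stmt6.entJoinF_nonneg μE _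
  have hDR : (0:ℝ) ≤ D := Nat.cast_nonneg D
  have key : (m : ℝ) * entJoinF μ S Q E ≤
      (E.card : ℝ) * entJoinF μE S Q (Finset.range m) + ((m:ℝ) * m * D) * Real.log k :=
    hsum.trans (add_le_add hc2 (mul_le_mul_of_nonneg_right hcount hlogk))
  rw [← sub_nonneg]
  have hexp : (1 / (m : ℝ)) * entJoinF μE S Q (Finset.range m)
        + 6 * (m : ℝ) * ((D : ℝ) / (E.card : ℝ)) * Real.log k
        - (1 / (E.card : ℝ)) * entJoinF μ S Q E
      = (((E.card : ℝ) * entJoinF μE S Q (Finset.range m)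
          + 6 * ((m:ℝ) * m * (D:ℝ)) * Real.log k) - (m : ℝ) * entJoinF μ S Q E)
        / ((m : ℝ) * (E.card : ℝ)) := by
    field_simp
  rw [hexp]
  apply div_nonneg _ (by positivity)
  have h5 : 0 ≤ ((m:ℝ) * (m:ℝ) * (D:ℝ)) * Real.log k := by positivity
  linarith [key]
end

section
/- Fix an integer d ≥ 1 and a real r > 1. For every ε > 0, every C^r bounded embedded curve σ : [0,1] → ℝ^d, and every y ∈ ℝ^d, there exists an affine map θ : [0,1] → [0,1] such that: (1) ‖D(σ∘θ)‖_0 ≤ 3ε; (2) σ^{−1}(B̄(y,ε)) ⊆ θ([0,1]), where B̄(y,ε) is the closed ball of radius ε around y; (3) |Dθ| ≤ 1. -/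
open MeasureTheory Filter Topology

/-- `sup01 G = sup_{t ∈ [0,1]} ‖G t‖`. -/
noncomputable def sup01 {F : Type*} [NormedAddCommGroup F] (G : ℝ → F) : ℝ :=
  sSup ((fun t => ‖G t‖) '' Set.Icc (0 : ℝ) 1)

/-- A `C^r` embedded curve: injective on `[0,1]` with nonvanishing derivative. -/
def IsEmbeddedCurve {d : ℕ} (σ : ℝ → EuclideanSpace ℝ (Fin d)) : Prop :=
  Set.InjOn σ (Set.Icc 0 1) ∧ ∀ t ∈ Set.Icc (0 : ℝ) 1, deriv σ t ≠ 0

/-- A curve is `C^r` bounded: it is `C^⌊r⌋`, its derivatives of orders `2,…,⌊r⌋` are bounded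
by `(1/6)‖Dσ‖₀` on `[0,1]`, and (if `r` is not an integer) the `α`-Hölder seminorm of the
`⌊r⌋`-th derivative is bounded by `(1/6)‖Dσ‖₀`, where `α = r − ⌊r⌋`. -/
def CrBoundedCurve (r : ℝ) {d : ℕ} (σ : ℝ → EuclideanSpace ℝ (Fin d)) : Prop :=
  ContDiff ℝ (⌊r⌋₊ : ℕ∞) σ ∧
  (∀ k : ℕ, 2 ≤ k → k ≤ ⌊r⌋₊ → sup01 (iteratedDeriv k σ) ≤ (1 / 6) * sup01 (deriv σ)) ∧
  ((⌊r⌋₊ : ℝ) < r → ∀ s ∈ Set.Icc (0 : ℝ) 1, ∀ t ∈ Set.Icc (0 : ℝ) 1,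
    ‖iteratedDeriv ⌊r⌋₊ σ s - iteratedDeriv ⌊r⌋₊ σ t‖
      ≤ (1 / 6) * sup01 (deriv σ) * |s - t| ^ (r - (⌊r⌋₊ : ℝ)))

/-- Mean-value style bound via the fundamental theorem of calculus. -/
lemma abs_sub_le_one01 {s t : ℝ} (hs : s ∈ Set.Icc (0 : ℝ) 1) (ht : t ∈ Set.Icc (0 : ℝ) 1) :
    |s - t| ≤ 1 :=
  abs_sub_le_iff.2 ⟨by linarith [hs.2, ht.1], by linarith [ht.2, hs.1]⟩

lemma key_mvt {E : Type*} [NormedAddCommGroup E] [NormedSpace ℝ E] [CompleteSpace E]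
    (f : ℝ → E) (C : ℝ) (hf : Differentiable ℝ f) (hf' : Continuous (deriv f))
    (hC : ∀ u ∈ Set.Icc (0 : ℝ) 1, ‖deriv f u‖ ≤ C) :
    ∀ s ∈ Set.Icc (0 : ℝ) 1, ∀ t ∈ Set.Icc (0 : ℝ) 1, ‖f t - f s‖ ≤ C * |t - s| := by
  intro s hs t ht
  have hftc : ∫ u in s..t, deriv f u = f t - f s :=
    intervalIntegral.integral_deriv_eq_sub (fun x _ => hf.differentiableAt)
      (hf'.intervalIntegrable s t)
  rw [← hftc]
  apply intervalIntegral.norm_integral_le_of_norm_le_const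
  intro x hx
  apply hC
  have hsub : Set.uIoc s t ⊆ Set.Icc (0 : ℝ) 1 := by
    refine subset_trans Set.Ioc_subset_Icc_self ?_
    apply Set.Icc_subset_Icc (le_min hs.1 ht.1) (max_le hs.2 ht.2)
  exact hsub hx

theorem stmt12 (d : ℕ) (hd : 1 ≤ d) (r : ℝ) (hr : 1 < r)
    (ε : ℝ) (hε : 0 < ε)
    (σ : ℝ → EuclideanSpace ℝ (Fin d))
    (hemb : IsEmbeddedCurve σ) (hbdd : CrBoundedCurve r σ)
    (y : EuclideanSpace ℝ (Fin d)) :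
    ∃ a b : ℝ,
      |a| ≤ 1 ∧
      Set.MapsTo (fun t => a * t + b) (Set.Icc (0 : ℝ) 1) (Set.Icc (0 : ℝ) 1) ∧
      sup01 (deriv (σ ∘ fun t => a * t + b)) ≤ 3 * ε ∧
      ∀ t ∈ Set.Icc (0 : ℝ) 1, σ t ∈ Metric.closedBall y ε →
        t ∈ (fun u => a * u + b) '' Set.Icc (0 : ℝ) 1 := by
  classical
  obtain ⟨hinj, hne⟩ := hemb
  obtain ⟨hcd, hk, hH⟩ := hbdd
  have hn1 : 1 ≤ ⌊r⌋₊ := Nat.le_floor (by exact_mod_cast hr.le)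
  have hcd1 : ContDiff ℝ 1 σ := hcd.of_le (by exact_mod_cast hn1)
  have hdiff : Differentiable ℝ σ := hcd1.differentiable one_ne_zero
  have hcont : Continuous (deriv σ) := hcd1.continuous_deriv le_rfl
  set M := sup01 (deriv σ) with hMdef
  have hbdd' : BddAbove ((fun t => ‖deriv σ t‖) '' Set.Icc (0 : ℝ) 1) :=
    (isCompact_Icc.image hcont.norm).bddAbove
  have hle : ∀ t ∈ Set.Icc (0 : ℝ) 1, ‖deriv σ t‖ ≤ M := fun t ht =>
    le_csSup hbdd' ⟨t, ht, rfl⟩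
  have h01 : (0 : ℝ) ∈ Set.Icc (0 : ℝ) 1 := ⟨le_rfl, zero_le_one⟩
  have hMpos : 0 < M :=
    lt_of_lt_of_le (norm_pos_iff.2 (hne 0 h01)) (hle 0 h01)
  -- key estimate on the oscillation of the derivative
  have hD : ∀ s ∈ Set.Icc (0 : ℝ) 1, ∀ t ∈ Set.Icc (0 : ℝ) 1,
      ‖deriv σ s - deriv σ t‖ ≤ M / 6 := by
    rcases eq_or_lt_of_le hn1 with h1 | h2
    · -- ⌊r⌋₊ = 1, use the Hölder condition
      intro s hs t ht
      have hfl : (⌊r⌋₊ : ℝ) < r := by rw [← h1]; simpa using hr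
      have hder : iteratedDeriv ⌊r⌋₊ σ = deriv σ := by
        rw [← h1, iteratedDeriv_one]
      have hthis := hH hfl s hs t ht
      rw [hder] at hthis
      have hexp : 0 ≤ r - (⌊r⌋₊ : ℝ) := by
        have : (⌊r⌋₊ : ℝ) ≤ r := Nat.floor_le (by linarith)
        linarith
      have hpow : |s - t| ^ (r - (⌊r⌋₊ : ℝ)) ≤ 1 :=
        Real.rpow_le_one (abs_nonneg _) (abs_sub_le_one01 hs ht) hexp
      have hmul := mul_le_mul_of_nonneg_left hpow (by positivity : (0:ℝ) ≤ (1/6) * M)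
      calc ‖deriv σ s - deriv σ t‖ ≤ (1 / 6) * M * |s - t| ^ (r - (⌊r⌋₊ : ℝ)) := hthis
        _ ≤ (1 / 6) * M * 1 := hmul
        _ = M / 6 := by ring
    · -- ⌊r⌋₊ ≥ 2, use the second derivative bound
      have h2' : (2 : ℕ) ≤ ⌊r⌋₊ := h2
      have hcd2 : ContDiff ℝ 2 σ := by
        apply hcd.of_le
        exact_mod_cast Nat.cast_le.mpr h2'
      have hd2 : ContDiff ℝ 1 (deriv σ) := by
        have := (contDiff_succ_iff_deriv (n := 1)).mp (by exact_mod_cast hcd2)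
        exact this.2.2
      have hdd : Differentiable ℝ (deriv σ) := hd2.differentiable one_ne_zero
      have hddc : Continuous (deriv (deriv σ)) := hd2.continuous_deriv le_rfl
      have h2eq : iteratedDeriv 2 σ = deriv (deriv σ) := by
        rw [show (2 : ℕ) = 1 + 1 from rfl, iteratedDeriv_succ, iteratedDeriv_one]
      have hsup2 : sup01 (iteratedDeriv 2 σ) ≤ (1 / 6) * M := hk 2 le_rfl h2
      have hbd2 : ∀ u ∈ Set.Icc (0 : ℝ) 1, ‖deriv (deriv σ) u‖ ≤ M / 6 := by
        intro u hu
        have hcont2 : Continuous fun t => ‖iteratedDeriv 2 σ t‖ := by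
          rw [h2eq]; exact hddc.norm
        have hmem : ‖iteratedDeriv 2 σ u‖ ≤ sup01 (iteratedDeriv 2 σ) :=
          le_csSup (isCompact_Icc.image hcont2).bddAbove ⟨u, hu, rfl⟩
        calc ‖deriv (deriv σ) u‖ = ‖iteratedDeriv 2 σ u‖ := by rw [h2eq]
          _ ≤ sup01 (iteratedDeriv 2 σ) := hmem
          _ ≤ (1 / 6) * M := hsup2
          _ = M / 6 := by ring
      intro s hs t ht
      have hmvt := key_mvt (deriv σ) (M / 6) hdd hddc hbd2 t ht s hs
      have habs : |s - t| ≤ 1 := abs_sub_le_one01 hs ht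
      calc ‖deriv σ s - deriv σ t‖ ≤ M / 6 * |s - t| := hmvt
        _ ≤ M / 6 * 1 := by apply mul_le_mul_of_nonneg_left habs; positivity
        _ = M / 6 := by ring
  -- lower bound on the pointwise norm of the derivative
  have hlow5 : ∀ s ∈ Set.Icc (0 : ℝ) 1, 5 * M / 6 ≤ ‖deriv σ s‖ := by
    intro s hs
    have hMle : M ≤ ‖deriv σ s‖ + M / 6 := by
      rw [hMdef]
      unfold sup01
      refine csSup_le ⟨‖deriv σ 0‖, ⟨0, h01, rfl⟩⟩ ?_
      rintro x ⟨u, hu, rfl⟩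
      calc ‖deriv σ u‖ ≤ ‖deriv σ s‖ + ‖deriv σ u - deriv σ s‖ := by
            have := norm_sub_norm_le (deriv σ u) (deriv σ s); linarith [norm_sub_rev (deriv σ u) (deriv σ s) ▸ this]
        _ ≤ ‖deriv σ s‖ + M / 6 := by linarith [hD u hu s hs]
    linarith
  -- lower bound on displacement
  have hlow : ∀ s ∈ Set.Icc (0 : ℝ) 1, ∀ t ∈ Set.Icc (0 : ℝ) 1,
      2 * M / 3 * |t - s| ≤ ‖σ t - σ s‖ := by
    intro s hs t ht
    set c := deriv σ s with hc
    set g : ℝ → EuclideanSpace ℝ (Fin d) := fun u => σ u - u • c with hg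
    have hgdiff : Differentiable ℝ g := by
      intro u
      exact (hdiff u).sub ((hasDerivAt_id u).smul_const c).differentiableAt
    have hgderiv : deriv g = fun u => deriv σ u - c := by
      funext u
      have h1 : HasDerivAt g (deriv σ u - c) u :=
        ((hdiff u).hasDerivAt).sub (by simpa using (hasDerivAt_id u).smul_const c)
      exact h1.deriv
    have hgc : Continuous (deriv g) := by
      rw [hgderiv]; exact hcont.sub continuous_const
    have hgbd : ∀ u ∈ Set.Icc (0 : ℝ) 1, ‖deriv g u‖ ≤ M / 6 := by
      intro u hu; rw [hgderiv]; exact hD u hu s hs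
    have hgest := key_mvt g (M / 6) hgdiff hgc hgbd s hs t ht
    have hgts : g t - g s = σ t - σ s - (t - s) • c := by
      simp only [hg]; rw [sub_smul]; abel
    rw [hgts] at hgest
    have htri : ‖(t - s) • c‖ - ‖σ t - σ s - (t - s) • c‖ ≤ ‖σ t - σ s‖ := by
      have := norm_sub_norm_le ((t - s) • c) ((t - s) • c - (σ t - σ s))
      have h2 : (t - s) • c - ((t - s) • c - (σ t - σ s)) = σ t - σ s := by abel
      rw [h2] at this
      have h3 : ‖(t - s) • c - (σ t - σ s)‖ = ‖σ t - σ s - (t - s) • c‖ := norm_sub_rev _ _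
      linarith
    have hnc : ‖(t - s) • c‖ = |t - s| * ‖c‖ := by rw [norm_smul, Real.norm_eq_abs]
    have h5 : 5 * M / 6 ≤ ‖c‖ := hlow5 s hs
    have habs : 0 ≤ |t - s| := abs_nonneg _
    nlinarith [hgest, htri, hnc]
  -- Choose a
  set a := min 1 (3 * ε / M) with hadef
  have ha0 : 0 < a := lt_min one_pos (by positivity)
  have ha1 : a ≤ 1 := min_le_left _ _
  have haM : a * M ≤ 3 * ε := by
    calc a * M ≤ (3 * ε / M) * M := by
          apply mul_le_mul_of_nonneg_right (min_le_right _ _) hMpos.le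
      _ = 3 * ε := by field_simp
  -- MapsTo and sup bound for any valid b
  have hmaps : ∀ b : ℝ, 0 ≤ b → b + a ≤ 1 →
      Set.MapsTo (fun t => a * t + b) (Set.Icc (0 : ℝ) 1) (Set.Icc (0 : ℝ) 1) := by
    intro b hb0 hba t ht
    simp only [Set.mem_Icc]
    have h1 : 0 ≤ a * t := mul_nonneg ha0.le ht.1
    have h2 : a * t ≤ a * 1 := mul_le_mul_of_nonneg_left ht.2 ha0.le
    constructor <;> linarith
  have hsup : ∀ b : ℝ, 0 ≤ b → b + a ≤ 1 →
      sup01 (deriv (σ ∘ fun t => a * t + b)) ≤ 3 * ε := by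
    intro b hb0 hba
    unfold sup01
    refine csSup_le ⟨‖deriv (σ ∘ fun t => a * t + b) 0‖, ⟨0, h01, rfl⟩⟩ ?_
    rintro x ⟨t, ht, rfl⟩
    have hθ : HasDerivAt (fun t : ℝ => a * t + b) a t := by
      simpa using ((hasDerivAt_id t).const_mul a).add_const b
    have hcomp : HasDerivAt (σ ∘ fun t => a * t + b) (a • deriv σ (a * t + b)) t :=
      HasDerivAt.scomp_of_eq t (hdiff (a * t + b)).hasDerivAt hθ rfl
    simp only
    rw [hcomp.deriv, norm_smul, Real.norm_eq_abs, abs_of_pos ha0]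
    have hmem : a * t + b ∈ Set.Icc (0 : ℝ) 1 := hmaps b hb0 hba ht
    calc a * ‖deriv σ (a * t + b)‖ ≤ a * M :=
          mul_le_mul_of_nonneg_left (hle _ hmem) ha0.le
      _ ≤ 3 * ε := haM
  -- the preimage set
  set S := {t : ℝ | t ∈ Set.Icc (0 : ℝ) 1 ∧ σ t ∈ Metric.closedBall y ε} with hSdef
  have hdiam : ∀ s ∈ S, ∀ t ∈ S, t - s ≤ a := by
    intro s hs t ht
    have h1 : 2 * M / 3 * |t - s| ≤ ‖σ t - σ s‖ := hlow s hs.1 t ht.1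
    have h2 : ‖σ t - σ s‖ ≤ 2 * ε := by
      have hst : dist (σ t) (σ s) ≤ dist (σ t) y + dist y (σ s) := dist_triangle _ _ _
      have hty : dist (σ t) y ≤ ε := ht.2
      have hys : dist y (σ s) ≤ ε := by rw [dist_comm]; exact hs.2
      calc ‖σ t - σ s‖ = dist (σ t) (σ s) := (dist_eq_norm _ _).symm
        _ ≤ 2 * ε := by linarith
    have h3 : |t - s| ≤ 3 * ε / M := by
      rw [le_div_iff₀ hMpos]
      nlinarith [abs_nonneg (t - s)]
    have h4 : |t - s| ≤ 1 := by
      rw [abs_le]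
      constructor <;> [linarith [ht.1.1, hs.1.2]; linarith [ht.1.2, hs.1.1]]
    calc t - s ≤ |t - s| := le_abs_self _
      _ ≤ a := le_min h4 h3
  by_cases hS : S.Nonempty
  · set c := sInf S with hcdef
    have hbdS : BddBelow S := ⟨0, fun x hx => hx.1.1⟩
    have hc0 : 0 ≤ c := le_csInf hS fun x hx => hx.1.1
    set b := min c (1 - a) with hbdef
    have hb0 : 0 ≤ b := le_min hc0 (by linarith)
    have hba : b + a ≤ 1 := by
      have := min_le_right c (1 - a); linarith
    refine ⟨a, b, ?_, hmaps b hb0 hba, hsup b hb0 hba, ?_⟩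
    · rw [abs_of_pos ha0]; exact ha1
    · intro t ht hmemball
      have htS : t ∈ S := ⟨ht, hmemball⟩
      have hbt : b ≤ t := le_trans (min_le_left _ _) (csInf_le hbdS htS)
      have htb : t ≤ b + a := by
        rcases le_total c (1 - a) with h | h
        · have hbe : b = c := min_eq_left h
          have hca : t - a ≤ c := by
            apply le_csInf hS
            intro s hsS
            linarith [hdiam s hsS t htS]
          rw [hbe]; linarith
        · have hbe : b = 1 - a := min_eq_right h
          rw [hbe]; linarith [ht.2]
      refine ⟨(t - b) / a, ⟨div_nonneg (by linarith) ha0.le, ?_⟩, ?_⟩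
      · rw [div_le_one ha0]; linarith
      · field_simp; ring
  · refine ⟨a, 0, ?_, hmaps 0 le_rfl (by linarith), hsup 0 le_rfl (by linarith), ?_⟩
    · rw [abs_of_pos ha0]; exact ha1
    · intro t ht hmemball
      exact absurd ⟨t, ht, hmemball⟩ hS
end
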